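/- arXiv:2201.05569 — 9 statements merged into one kernel-verified Lean document; each statement's English description precedes it below -/
import Mathlib

section
/- Let $s_1,\dots,s_n$ and $t_1,\dots,t_n$ be real numbers and $c$ a real number such that $s_i + t_i = c$ for all $i$. Then equality $(\sum_{i=1}^n s_i)(\sum_{i=1}^n t_i) = n \sum_{i=1}^n s_i t_i$ holds if and only if all the numbers $s_i$ $(1 \le i \le n)$ are equal to their arithmetic mean (i.e., all $s_i$ are equal), assuming $n \ge 1$. -/
open SimpleGraph Set

/-- A `(Y,Y')`-distance-biregular graph: a finite connected bipartite graph in which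
every vertex is distance-regularized, and vertices in the same color class share the
same intersection numbers (`c`, `b` for class `Y` and `c'`, `b'` for class `Y'`),
while the two color classes have different intersection arrays.
`D` (resp. `D'`) is the common eccentricity of vertices in `Y` (resp. `Y'`). -/
structure DBRG (V : Type) [Fintype V] where
  G : SimpleGraph V
  conn : G.Connected
  Y : Finset V
  Y' : Finset V
  Yne : Y.Nonempty
  Y'ne : Y'.Nonempty
  cover : ∀ v, v ∈ Y ∨ v ∈ Y'
  disj : ∀ v, ¬(v ∈ Y ∧ v ∈ Y')
  bip : ∀ u v, G.Adj u v → (u ∈ Y ↔ v ∈ Y')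
  D : ℕ
  D' : ℕ
  eccY : ∀ x ∈ Y, (∃ y, G.dist x y = D) ∧ ∀ y, G.dist x y ≤ D
  eccY' : ∀ x ∈ Y', (∃ y, G.dist x y = D') ∧ ∀ y, G.dist x y ≤ D'
  c : ℕ → ℕ
  b : ℕ → ℕ
  c' : ℕ → ℕ
  b' : ℕ → ℕ
  hc : ∀ i, 1 ≤ i → ∀ x ∈ Y, ∀ z, G.dist x z = i →
    {w | G.Adj z w ∧ G.dist x w = i - 1}.ncard = c i
  hb : ∀ i, ∀ x ∈ Y, ∀ z, G.dist x z = i →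
    {w | G.Adj z w ∧ G.dist x w = i + 1}.ncard = b i
  hc' : ∀ i, 1 ≤ i → ∀ x ∈ Y', ∀ z, G.dist x z = i →
    {w | G.Adj z w ∧ G.dist x w = i - 1}.ncard = c' i
  hb' : ∀ i, ∀ x ∈ Y', ∀ z, G.dist x z = i →
    {w | G.Adj z w ∧ G.dist x w = i + 1}.ncard = b' i
  c0 : c 0 = 0
  c'0 : c' 0 = 0
  nonreg : ¬ (∀ i, c i = c' i ∧ b i = b' i)

/-- `Γ` is `2`-`Y`-homogeneous with parameters `γ i`: for all `1 ≤ i ≤ D - 1` and all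
`x ∈ Y`, `y ∈ Γ₂(x)`, `z ∈ Γ_{i,i}(x,y)`, the number of common neighbours of `x` and `y`
at distance `i - 1` from `z` equals `γ i` (independently of `x`, `y`, `z`). -/
def DBRG.TwoYHom {V : Type} [Fintype V] (Γ : DBRG V) (γ : ℕ → ℕ) : Prop :=
  ∀ i, 1 ≤ i → i ≤ Γ.D - 1 → ∀ x ∈ Γ.Y, ∀ y, Γ.G.dist x y = 2 →
    ∀ z, Γ.G.dist x z = i → Γ.G.dist y z = i →
      {w | Γ.G.dist z w = i - 1 ∧ Γ.G.Adj x w ∧ Γ.G.Adj y w}.ncard = γ i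
theorem stmt_1 (n : ℕ) (hn : 1 ≤ n) (s t : Fin n → ℝ) (c : ℝ) (h : ∀ i, s i + t i = c) :
    (∑ i, s i) * (∑ i, t i) = (n : ℝ) * ∑ i, s i * t i ↔
      ∀ i, s i = (∑ j, s j) / (n : ℝ) := by
  have hn0 : (n : ℝ) ≠ 0 := by positivity
  have ht : ∀ i, t i = c - s i := fun i => by linarith [h i]
  have hT : (∑ i, t i) = n * c - ∑ i, s i := by
    simp [ht, Finset.sum_sub_distrib, Finset.card_univ, mul_comm]
  have hst : (∑ i, s i * t i) = c * (∑ i, s i) - ∑ i, (s i)^2 := by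
    simp only [ht]
    rw [Finset.sum_congr rfl (fun i _ => by ring :
      ∀ i ∈ Finset.univ, s i * (c - s i) = c * s i - (s i)^2),
      Finset.sum_sub_distrib, Finset.mul_sum]
  set S := ∑ i, s i with hS
  have key : (∑ i, (s i - S / n)^2) = (∑ i, (s i)^2) - S^2 / n := by
    have h1 : (∑ i, (s i - S / n)^2)
        = (∑ i, (s i)^2) - 2 * (S / n) * S + n * (S / n)^2 := by
      rw [Finset.sum_congr rfl (fun i _ => by ring :
        ∀ i ∈ Finset.univ, (s i - S/n)^2 = (s i)^2 - (2*(S/n)) * s i + (S/n)^2),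
        Finset.sum_add_distrib, Finset.sum_sub_distrib, ← Finset.mul_sum,
        Finset.sum_const, Finset.card_univ, Fintype.card_fin, nsmul_eq_mul, ← hS]
    rw [h1]; field_simp; ring
  constructor
  · intro heq i
    have hz : (∑ j, (s j - S / n)^2) = 0 := by
      rw [key]
      rw [hT, hst] at heq
      field_simp
      nlinarith [heq]
    have := (Finset.sum_eq_zero_iff_of_nonneg (fun j _ => sq_nonneg (s j - S / n))).1 hz i (Finset.mem_univ i)
    have := pow_eq_zero_iff (n := 2) (by norm_num) |>.1 this
    linarith [this]
  · intro hall
    rw [hT, hst]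
    have h2 : (∑ i, (s i)^2) = S^2 / n := by
      calc (∑ i, (s i)^2) = ∑ i : Fin n, (S/n)^2 := by
            apply Finset.sum_congr rfl; intro i _; rw [hall i]
        _ = n * (S/n)^2 := by
            rw [Finset.sum_const, Finset.card_univ, Fintype.card_fin, nsmul_eq_mul]
        _ = S^2 / n := by field_simp
    rw [h2]; field_simp
end

section
/- Let $\Gamma$ be a finite connected simple graph, $u$ a vertex, $i,j$ nonnegative integers with $i+j$ even, and suppose there exist vertices $v$ with $d(u,v)=i$ and $w$ with $d(u,w)=i+j$ and $d(v,w)=j$. If $\Gamma$ is distance-regular around every vertex with intersection numbers $c_\ell, b_\ell$ depending only on the color class (i.e., $\Gamma$ is distance-biregular with classes $Y, Y'$), $u \in Y$, and $i+j \le D$ where $D$ is the eccentricity of vertices in $Y$, then $c_i \le b_j$ (where $c_i, b_j$ are the intersection numbers of the color class $Y$). -/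
open SimpleGraph Set

lemma DBRG.walk_parity {V : Type} [Fintype V] (Γ : DBRG V) {a b : V}
    (p : Γ.G.Walk a b) : (a ∈ Γ.Y ↔ b ∈ Γ.Y) ↔ Even p.length := by
  induction p with
  | nil => simp
  | @cons x y z h p ih =>
    have h1 : x ∈ Γ.Y ↔ y ∈ Γ.Y' := Γ.bip _ _ h
    have h2 : y ∈ Γ.Y' ↔ ¬ y ∈ Γ.Y := by
      constructor
      · intro hy hyY; exact Γ.disj y ⟨hyY, hy⟩
      · intro hy; rcases Γ.cover y with h'|h'; · exact absurd h' hy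
        · exact h'
    simp only [SimpleGraph.Walk.length_cons, Nat.even_add_one]
    rw [← ih]
    tauto

theorem stmt_2 {V : Type} [Fintype V] (Γ : DBRG V) (u : V) (hu : u ∈ Γ.Y)
    (i j : ℕ) (hpar : Even (i + j)) (hD : i + j ≤ Γ.D)
    (hex : ∃ v w, Γ.G.dist u v = i ∧ Γ.G.dist u w = i + j ∧ Γ.G.dist v w = j) :
    Γ.c i ≤ Γ.b j := by
  obtain ⟨v, w, hv, hw, hvw⟩ := hex
  rcases Nat.eq_zero_or_pos i with hi | hi
  · subst hi; rw [Γ.c0]; exact Nat.zero_le _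
  have hwY : w ∈ Γ.Y := by
    obtain ⟨p, hp⟩ := (Γ.conn u w).exists_walk_length_eq_dist
    have := (Γ.walk_parity p).mpr (by rw [hp, hw]; exact hpar)
    exact this.mp hu
  have hcS := Γ.hc i hi u hu v hv
  have hbS := Γ.hb j w hwY v (by rw [SimpleGraph.dist_comm]; exact hvw)
  rw [← hcS, ← hbS]
  apply Set.ncard_le_ncard _ (Set.toFinite _)
  intro t ht
  obtain ⟨hadj, hdt⟩ := ht
  refine ⟨hadj, ?_⟩
  have htri : Γ.G.dist u w ≤ Γ.G.dist u t + Γ.G.dist t w := Γ.conn.dist_triangle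
  have htri2 : Γ.G.dist w t ≤ Γ.G.dist w v + Γ.G.dist v t := Γ.conn.dist_triangle
  have hvt : Γ.G.dist v t = 1 := SimpleGraph.dist_eq_one_iff_adj.mpr hadj
  have hwv : Γ.G.dist w v = j := by rw [SimpleGraph.dist_comm]; exact hvw
  have hwt : Γ.G.dist w t = Γ.G.dist t w := SimpleGraph.dist_comm
  omega
end

section
/- Let $\Gamma$ be a $(Y,Y')$-distance-biregular graph with $D \ge 3$, where $D$ is the eccentricity of vertices of $Y$. For every integer $i$ with $1 \le i \le \min\{D-1, D'-1\}$: if $c'_{i+1} = c_i$ then $c_{i+1} = c'_i$, and if $c'_{i+1} > c_i$ then $c_{i+1} > c'_i$. -/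
open SimpleGraph Set

private lemma bip_parity {V : Type} {G : SimpleGraph V} {Y Y' : Finset V}
    (cover : ∀ v, v ∈ Y ∨ v ∈ Y') (disj : ∀ v, ¬(v ∈ Y ∧ v ∈ Y'))
    (bip : ∀ u v, G.Adj u v → (u ∈ Y ↔ v ∈ Y')) :
    ∀ {a b : V} (p : G.Walk a b), ((a ∈ Y) ↔ (b ∈ Y)) ↔ Even p.length := by
  intro a b p
  induction p with
  | nil => simp
  | @cons u v w h q ih =>
    have h1 := bip u v h
    have h2 := cover v
    have h3 := disj v
    rw [SimpleGraph.Walk.length_cons, Nat.even_add_one]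
    tauto

private lemma adj_dist_ne {V : Type} {G : SimpleGraph V} {Y Y' : Finset V}
    (conn : G.Connected)
    (cover : ∀ v, v ∈ Y ∨ v ∈ Y') (disj : ∀ v, ¬(v ∈ Y ∧ v ∈ Y'))
    (bip : ∀ u v, G.Adj u v → (u ∈ Y ↔ v ∈ Y'))
    {u v : V} (hadj : G.Adj u v) (x : V) :
    G.dist x u ≠ G.dist x v := by
  intro he
  obtain ⟨p, hp⟩ := (conn.preconnected x u).exists_walk_length_eq_dist
  obtain ⟨q, hq⟩ := (conn.preconnected x v).exists_walk_length_eq_dist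
  have h1 := bip_parity cover disj bip p
  have h2 := bip_parity cover disj bip q
  rw [hp, he] at h1
  rw [hq] at h2
  have h3 := bip u v hadj
  have h4 := bip v u hadj.symm
  have h5 := cover u
  have h6 := cover v
  have h7 := disj u
  have h8 := disj v
  tauto

private lemma step_down {V : Type} {G : SimpleGraph V} (conn : G.Connected)
    (x y : V) (h : 1 ≤ G.dist x y) :
    ∃ w, G.Adj y w ∧ G.dist x w = G.dist x y - 1 := by
  obtain ⟨p, hp⟩ := (conn.preconnected y x).exists_walk_length_eq_dist
  cases p with
  | nil =>
    rw [SimpleGraph.dist_comm] at h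
    simp only [SimpleGraph.Walk.length_nil] at hp
    omega
  | @cons _ w _ h' q =>
    refine ⟨w, h', ?_⟩
    have h1 : G.dist w x ≤ q.length := SimpleGraph.dist_le q
    rw [SimpleGraph.Walk.length_cons] at hp
    have h2 : G.dist y x = q.length + 1 := hp.symm
    have h3 : G.dist x y ≤ G.dist x w + G.dist w y := conn.dist_triangle
    have h4 : G.dist w y = 1 := by
      rw [SimpleGraph.dist_comm]; exact SimpleGraph.dist_eq_one_iff_adj.mpr h'
    have h5 : G.dist x w = G.dist w x := SimpleGraph.dist_comm
    have h6 : G.dist y x = G.dist x y := SimpleGraph.dist_comm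
    omega

private lemma sphere_nonempty {V : Type} {G : SimpleGraph V} (conn : G.Connected)
    (x : V) : ∀ (y : V) (k : ℕ), k ≤ G.dist x y → ∃ w, G.dist x w = k := by
  suffices h : ∀ (n : ℕ) (y : V), G.dist x y = n → ∀ k ≤ n, ∃ w, G.dist x w = k by
    intro y k hk; exact h _ y rfl k hk
  intro n
  induction n with
  | zero =>
    intro y _ k hk
    have : k = 0 := by omega
    exact ⟨x, by simp [this]⟩
  | succ n ih =>
    intro y hy k hk
    rcases Nat.eq_or_lt_of_le hk with rfl | hlt
    · exact ⟨y, hy⟩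
    · obtain ⟨w, _, hw⟩ := step_down conn x y (by omega)
      exact ih w (by omega) k (by omega)

theorem stmt_3 {V : Type} [Fintype V] (Γ : DBRG V) (hD : 3 ≤ Γ.D)
    (i : ℕ) (hi1 : 1 ≤ i) (hi2 : i ≤ min (Γ.D - 1) (Γ.D' - 1)) :
    (Γ.c' (i + 1) = Γ.c i → Γ.c (i + 1) = Γ.c' i) ∧
    (Γ.c' (i + 1) > Γ.c i → Γ.c (i + 1) > Γ.c' i) := by
  have hiD : i ≤ Γ.D - 1 := hi2.trans (min_le_left _ _)
  have hiD' : i ≤ Γ.D' - 1 := hi2.trans (min_le_right _ _)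
  obtain ⟨x, hx⟩ := Γ.Yne
  -- find a neighbour z of x
  obtain ⟨⟨y₀, hy₀⟩, -⟩ := Γ.eccY x hx
  obtain ⟨z, hxz⟩ := sphere_nonempty Γ.conn x y₀ 1 (by omega)
  have hadj : Γ.G.Adj x z := SimpleGraph.dist_eq_one_iff_adj.mp hxz
  have hz' : z ∈ Γ.Y' := (Γ.bip x z hadj).mp hx
  have hzx : Γ.G.dist z x = 1 := by rw [SimpleGraph.dist_comm]; exact hxz
  have hD'2 : 2 ≤ Γ.D' := by
    obtain ⟨⟨y₁, hy₁⟩, hub⟩ := Γ.eccY' z hz'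
    omega
  -- positivity of b_j for j+1 ≤ D
  have bpos : ∀ j, j + 1 ≤ Γ.D → 0 < Γ.b j := by
    intro j hj
    obtain ⟨⟨y, hy⟩, -⟩ := Γ.eccY x hx
    obtain ⟨v, hv⟩ := sphere_nonempty Γ.conn x y (j + 1) (by omega)
    obtain ⟨w, haw, hw⟩ := step_down Γ.conn x v (by omega)
    have hbw := Γ.hb j x hx w (by omega)
    have hmem : v ∈ {u | Γ.G.Adj w u ∧ Γ.G.dist x u = j + 1} := ⟨haw.symm, hv⟩
    have hpos : 0 < {u | Γ.G.Adj w u ∧ Γ.G.dist x u = j + 1}.ncard :=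
      (Set.ncard_pos (Set.toFinite _)).mpr ⟨v, hmem⟩
    omega
  have b'pos : ∀ j, j + 1 ≤ Γ.D' → 0 < Γ.b' j := by
    intro j hj
    obtain ⟨⟨y, hy⟩, -⟩ := Γ.eccY' z hz'
    obtain ⟨v, hv⟩ := sphere_nonempty Γ.conn z y (j + 1) (by omega)
    obtain ⟨w, haw, hw⟩ := step_down Γ.conn z v (by omega)
    have hbw := Γ.hb' j z hz' w (by omega)
    have hmem : v ∈ {u | Γ.G.Adj w u ∧ Γ.G.dist z u = j + 1} := ⟨haw.symm, hv⟩
    have hpos : 0 < {u | Γ.G.Adj w u ∧ Γ.G.dist z u = j + 1}.ncard :=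
      (Set.ncard_pos (Set.toFinite _)).mpr ⟨v, hmem⟩
    omega
  -- nonemptiness of Γ_{j,j+1}(x,z)
  have Anon : ∀ j ≤ i, ∃ w, Γ.G.dist x w = j ∧ Γ.G.dist z w = j + 1 := by
    intro j
    induction j with
    | zero => intro _; exact ⟨x, by simp, hzx⟩
    | succ j ih =>
      intro hj
      obtain ⟨w, hxw, hzw⟩ := ih (by omega)
      have hbw := Γ.hb' (j + 1) z hz' w hzw
      have hpos : 0 < Γ.b' (j + 1) := b'pos (j + 1) (by omega)
      have hne : {u | Γ.G.Adj w u ∧ Γ.G.dist z u = (j + 1) + 1}.Nonempty :=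
        Set.nonempty_of_ncard_ne_zero (by omega)
      obtain ⟨u, hau, hzu⟩ := hne
      refine ⟨u, ?_, hzu⟩
      have h1 : Γ.G.dist x u ≤ Γ.G.dist x w + Γ.G.dist w u := Γ.conn.dist_triangle
      have h2 : Γ.G.dist z u ≤ Γ.G.dist z x + Γ.G.dist x u := Γ.conn.dist_triangle
      have h3 : Γ.G.dist w u = 1 := SimpleGraph.dist_eq_one_iff_adj.mpr hau
      omega
  -- nonemptiness of Γ_{j,j-1}(x,z)
  have Bnon : ∀ j, 1 ≤ j → j ≤ i + 1 → ∃ w, Γ.G.dist x w = j ∧ Γ.G.dist z w = j - 1 := by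
    intro j
    induction j with
    | zero => intro h; omega
    | succ j ih =>
      intro _ hj
      rcases Nat.eq_zero_or_pos j with rfl | hjpos
      · exact ⟨z, hxz, by simp⟩
      · obtain ⟨w, hxw, hzw⟩ := ih hjpos (by omega)
        have hbw := Γ.hb j x hx w hxw
        have hpos : 0 < Γ.b j := bpos j (by omega)
        have hne : {u | Γ.G.Adj w u ∧ Γ.G.dist x u = j + 1}.Nonempty :=
          Set.nonempty_of_ncard_ne_zero (by omega)
        obtain ⟨u, hau, hxu⟩ := hne
        refine ⟨u, hxu, ?_⟩
        have h1 : Γ.G.dist z u ≤ Γ.G.dist z w + Γ.G.dist w u := Γ.conn.dist_triangle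
        have h2 : Γ.G.dist x u ≤ Γ.G.dist x z + Γ.G.dist z u := Γ.conn.dist_triangle
        have h3 : Γ.G.dist w u = 1 := SimpleGraph.dist_eq_one_iff_adj.mpr hau
        omega
  -- counting at a vertex of Γ_{i,i+1}(x,z)
  have countA : ∀ w, Γ.G.dist x w = i → Γ.G.dist z w = i + 1 →
      {u | Γ.G.Adj w u ∧ Γ.G.dist x u = i + 1 ∧ Γ.G.dist z u = i}.ncard
        = Γ.c' (i + 1) - Γ.c i ∧ Γ.c i ≤ Γ.c' (i + 1) := by
    intro w hxw hzw
    have hS1 : {u | Γ.G.Adj w u ∧ Γ.G.dist x u = i - 1}.ncard = Γ.c i :=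
      Γ.hc i hi1 x hx w hxw
    have hS2 : {u | Γ.G.Adj w u ∧ Γ.G.dist z u = i}.ncard = Γ.c' (i + 1) := by
      have := Γ.hc' (i + 1) (by omega) z hz' w hzw
      simpa using this
    have hsub : {u | Γ.G.Adj w u ∧ Γ.G.dist x u = i - 1}
        ⊆ {u | Γ.G.Adj w u ∧ Γ.G.dist z u = i} := by
      rintro u ⟨ha, hd⟩
      refine ⟨ha, ?_⟩
      have h1 : Γ.G.dist z u ≤ Γ.G.dist z x + Γ.G.dist x u := Γ.conn.dist_triangle
      have h2 : Γ.G.dist z w ≤ Γ.G.dist z u + Γ.G.dist u w := Γ.conn.dist_triangle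
      have h3 : Γ.G.dist u w = 1 := SimpleGraph.dist_eq_one_iff_adj.mpr ha.symm
      omega
    have hset : {u | Γ.G.Adj w u ∧ Γ.G.dist z u = i}
        \ {u | Γ.G.Adj w u ∧ Γ.G.dist x u = i - 1}
        = {u | Γ.G.Adj w u ∧ Γ.G.dist x u = i + 1 ∧ Γ.G.dist z u = i} := by
      ext u
      simp only [Set.mem_diff, Set.mem_setOf_eq]
      constructor
      · rintro ⟨⟨ha, hzu⟩, hn⟩
        have hne : Γ.G.dist x w ≠ Γ.G.dist x u :=
          adj_dist_ne Γ.conn Γ.cover Γ.disj Γ.bip ha x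
        have h1 : Γ.G.dist x u ≤ Γ.G.dist x w + Γ.G.dist w u := Γ.conn.dist_triangle
        have h2 : Γ.G.dist x w ≤ Γ.G.dist x u + Γ.G.dist u w := Γ.conn.dist_triangle
        have h3 : Γ.G.dist w u = 1 := SimpleGraph.dist_eq_one_iff_adj.mpr ha
        have h4 : Γ.G.dist u w = 1 := by rw [SimpleGraph.dist_comm]; exact h3
        have h5 : Γ.G.dist x u ≠ i - 1 := fun h => hn ⟨ha, h⟩
        exact ⟨ha, by omega, hzu⟩
      · rintro ⟨ha, hxu, hzu⟩
        exact ⟨⟨ha, hzu⟩, fun h => by have := h.2; omega⟩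
    constructor
    · rw [← hset, Set.ncard_diff hsub, hS1, hS2]
    · rw [← hS1, ← hS2]
      exact Set.ncard_le_ncard hsub (Set.toFinite _)
  -- counting at a vertex of Γ_{i+1,i}(x,z)
  have countB : ∀ w, Γ.G.dist x w = i + 1 → Γ.G.dist z w = i →
      {u | Γ.G.Adj w u ∧ Γ.G.dist z u = i + 1 ∧ Γ.G.dist x u = i}.ncard
        = Γ.c (i + 1) - Γ.c' i ∧ Γ.c' i ≤ Γ.c (i + 1) := by
    intro w hxw hzw
    have hS1 : {u | Γ.G.Adj w u ∧ Γ.G.dist z u = i - 1}.ncard = Γ.c' i :=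
      Γ.hc' i hi1 z hz' w hzw
    have hS2 : {u | Γ.G.Adj w u ∧ Γ.G.dist x u = i}.ncard = Γ.c (i + 1) := by
      have := Γ.hc (i + 1) (by omega) x hx w hxw
      simpa using this
    have hsub : {u | Γ.G.Adj w u ∧ Γ.G.dist z u = i - 1}
        ⊆ {u | Γ.G.Adj w u ∧ Γ.G.dist x u = i} := by
      rintro u ⟨ha, hd⟩
      refine ⟨ha, ?_⟩
      have h1 : Γ.G.dist x u ≤ Γ.G.dist x z + Γ.G.dist z u := Γ.conn.dist_triangle
      have h2 : Γ.G.dist x w ≤ Γ.G.dist x u + Γ.G.dist u w := Γ.conn.dist_triangle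
      have h3 : Γ.G.dist u w = 1 := SimpleGraph.dist_eq_one_iff_adj.mpr ha.symm
      omega
    have hset : {u | Γ.G.Adj w u ∧ Γ.G.dist x u = i}
        \ {u | Γ.G.Adj w u ∧ Γ.G.dist z u = i - 1}
        = {u | Γ.G.Adj w u ∧ Γ.G.dist z u = i + 1 ∧ Γ.G.dist x u = i} := by
      ext u
      simp only [Set.mem_diff, Set.mem_setOf_eq]
      constructor
      · rintro ⟨⟨ha, hxu⟩, hn⟩
        have hne : Γ.G.dist z w ≠ Γ.G.dist z u :=
          adj_dist_ne Γ.conn Γ.cover Γ.disj Γ.bip ha z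
        have h1 : Γ.G.dist z u ≤ Γ.G.dist z w + Γ.G.dist w u := Γ.conn.dist_triangle
        have h2 : Γ.G.dist z w ≤ Γ.G.dist z u + Γ.G.dist u w := Γ.conn.dist_triangle
        have h3 : Γ.G.dist w u = 1 := SimpleGraph.dist_eq_one_iff_adj.mpr ha
        have h4 : Γ.G.dist u w = 1 := by rw [SimpleGraph.dist_comm]; exact h3
        have h5 : Γ.G.dist z u ≠ i - 1 := fun h => hn ⟨ha, h⟩
        exact ⟨ha, by omega, hxu⟩
      · rintro ⟨ha, hzu, hxu⟩
        exact ⟨⟨ha, hxu⟩, fun h => by have := h.2; omega⟩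
    constructor
    · rw [← hset, Set.ncard_diff hsub, hS1, hS2]
    · rw [← hS1, ← hS2]
      exact Set.ncard_le_ncard hsub (Set.toFinite _)
  -- conclusion
  constructor
  · intro h
    obtain ⟨wB, hxwB, hzwB⟩ := Bnon (i + 1) (by omega) le_rfl
    have hzwB' : Γ.G.dist z wB = i := by omega
    obtain ⟨hcB, hleB⟩ := countB wB hxwB hzwB'
    by_contra hne
    have hne' : {u | Γ.G.Adj wB u ∧ Γ.G.dist z u = i + 1 ∧ Γ.G.dist x u = i}.Nonempty :=
      Set.nonempty_of_ncard_ne_zero (by omega)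
    obtain ⟨u, hau, hzu, hxu⟩ := hne'
    obtain ⟨hcA, -⟩ := countA u hxu hzu
    have hmem : wB ∈ {v | Γ.G.Adj u v ∧ Γ.G.dist x v = i + 1 ∧ Γ.G.dist z v = i} :=
      ⟨hau.symm, hxwB, hzwB'⟩
    have hpos : 0 < {v | Γ.G.Adj u v ∧ Γ.G.dist x v = i + 1 ∧ Γ.G.dist z v = i}.ncard :=
      (Set.ncard_pos (Set.toFinite _)).mpr ⟨wB, hmem⟩
    omega
  · intro h
    obtain ⟨wA, hxwA, hzwA⟩ := Anon i le_rfl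
    obtain ⟨hcA, -⟩ := countA wA hxwA hzwA
    have hne' : {u | Γ.G.Adj wA u ∧ Γ.G.dist x u = i + 1 ∧ Γ.G.dist z u = i}.Nonempty :=
      Set.nonempty_of_ncard_ne_zero (by omega)
    obtain ⟨u, hau, hxu, hzu⟩ := hne'
    obtain ⟨hcB, hleB⟩ := countB u hxu hzu
    have hmem : wA ∈ {v | Γ.G.Adj u v ∧ Γ.G.dist z v = i + 1 ∧ Γ.G.dist x v = i} :=
      ⟨hau.symm, hzwA, hxwA⟩
    have hpos : 0 < {v | Γ.G.Adj u v ∧ Γ.G.dist z v = i + 1 ∧ Γ.G.dist x v = i}.ncard :=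
      (Set.ncard_pos (Set.toFinite _)).mpr ⟨wA, hmem⟩
    omega
end

section
/- Let $\Gamma$ be a $(Y,Y')$-distance-biregular graph. Then $b_1(c_2 - 1) = b'_1(c'_2 - 1)$, where $b_1, c_2$ are intersection numbers of the color class $Y$ and $b'_1, c'_2$ of the class $Y'$. -/
open SimpleGraph Set

lemma my_length_drop {V : Type} {G : SimpleGraph V} {u v : V} (p : G.Walk u v) (n : ℕ) :
    (p.drop n).length = p.length - n := by
  induction p generalizing n with
  | nil => cases n <;> simp [SimpleGraph.Walk.drop]
  | cons h q ih =>
    cases n with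
    | zero => simp [SimpleGraph.Walk.drop]
    | succ n => simp [SimpleGraph.Walk.drop, ih]

lemma my_dist_getVert {V : Type} {G : SimpleGraph V} (conn : G.Connected) {x t : V}
    (p : G.Walk x t) (hp : p.length = G.dist x t) (i : ℕ) (hi : i ≤ p.length)
    (hle : G.dist x (p.getVert i) ≤ i) : G.dist x (p.getVert i) = i := by
  have h1 : G.dist (p.getVert i) t ≤ p.length - i := by
    have := SimpleGraph.dist_le (p.drop i)
    rwa [my_length_drop] at this
  have h2 := conn.dist_triangle (u := x) (v := p.getVert i) (w := t)
  omega


theorem stmt_6 {V : Type} [Fintype V] (Γ : DBRG V) (hD : 3 ≤ Γ.D) :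
    (Γ.b 1 : ℤ) * ((Γ.c 2 : ℤ) - 1) = (Γ.b' 1 : ℤ) * ((Γ.c' 2 : ℤ) - 1) := by
  classical
  obtain ⟨x, hx⟩ := Γ.Yne
  set G := Γ.G with hG
  obtain ⟨⟨t, ht⟩, -⟩ := Γ.eccY x hx
  obtain ⟨p, hp⟩ := Γ.conn.exists_walk_length_eq_dist x t
  have hplen : 3 ≤ p.length := by rw [hp, ht]; exact hD
  -- the three successive vertices y, u, v on the geodesic
  set y := p.getVert 1 with hy
  set u := p.getVert 2 with hu
  set v := p.getVert 3 with hv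
  have hxy : G.Adj x y := by
    have := p.adj_getVert_succ (i := 0) (by omega)
    simpa using this
  have hyu : G.Adj y u := p.adj_getVert_succ (i := 1) (by omega)
  have huv : G.Adj u v := p.adj_getVert_succ (i := 2) (by omega)
  have hdxy : G.dist x y = 1 := dist_eq_one_iff_adj.mpr hxy
  have hdxu : G.dist x u = 2 := by
    refine my_dist_getVert Γ.conn p hp 2 (by omega) ?_
    calc G.dist x u ≤ G.dist x y + G.dist y u := Γ.conn.dist_triangle
      _ ≤ 1 + 1 := by
          rw [hdxy, dist_eq_one_iff_adj.mpr hyu]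
      _ = 2 := rfl
  have hdxv : G.dist x v = 3 := by
    refine my_dist_getVert Γ.conn p hp 3 (by omega) ?_
    calc G.dist x v ≤ G.dist x u + G.dist u v := Γ.conn.dist_triangle
      _ ≤ 2 + 1 := by rw [hdxu, dist_eq_one_iff_adj.mpr huv]
      _ = 3 := rfl
  -- color classes
  have hy' : y ∈ Γ.Y' := (Γ.bip x y hxy).mp hx
  have hu' : u ∈ Γ.Y := by
    rcases Γ.cover u with h | h
    · exact h
    · exact absurd ((Γ.bip y u hyu).mpr h) (fun hyY => Γ.disj y ⟨hyY, hy'⟩)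
  have hdyx : G.dist y x = 1 := by rwa [SimpleGraph.dist_comm]
  have hdyu : G.dist y u = 1 := dist_eq_one_iff_adj.mpr hyu
  have hdyv : G.dist y v = 2 := by
    have hle : G.dist y v ≤ 2 := by
      calc G.dist y v ≤ G.dist y u + G.dist u v := Γ.conn.dist_triangle
        _ ≤ 1 + 1 := by rw [hdyu, dist_eq_one_iff_adj.mpr huv]
        _ = 2 := rfl
    have hne0 : y ≠ v := by
      intro h; rw [← h] at hdxv; omega
    have hne1 : ¬ G.Adj y v := by
      intro hadj
      have hv' : v ∈ Γ.Y' := (Γ.bip u v huv).mp hu'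
      have : y ∈ Γ.Y := (Γ.bip y v hadj).mpr hv'
      exact Γ.disj y ⟨this, hy'⟩
    have h0 : G.dist y v ≠ 0 := fun h => hne0 (Γ.conn.dist_eq_zero_iff.mp h)
    have h1 : G.dist y v ≠ 1 := fun h => hne1 (dist_eq_one_iff_adj.mp h)
    omega
  -- the two sets A and B
  set A : Finset V := Finset.univ.filter (fun w => G.Adj x w ∧ G.dist y w = 2) with hA
  set B : Finset V := Finset.univ.filter (fun w => G.Adj y w ∧ G.dist x w = 2) with hB
  have ncard_eq : ∀ (P : V → Prop) (_ : DecidablePred P),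
      {w | P w}.ncard = (Finset.univ.filter P).card := by
    intro P hP
    rw [show {w | P w} = ↑(Finset.univ.filter P) by ext w; simp, Set.ncard_coe_finset]
  have hcardA : A.card = Γ.b' 1 := by
    have := Γ.hb' 1 y hy' x hdyx
    rw [ncard_eq _ inferInstance] at this
    rw [hA, ← this]
  have hcardB : B.card = Γ.b 1 := by
    have := Γ.hb 1 x hx y hdxy
    rw [ncard_eq _ inferInstance] at this
    rw [hB, ← this]
  -- each w ∈ A has c'2 - 1 neighbours in B
  have hc'2 : 1 ≤ Γ.c' 2 := by
    have := Γ.hc' 2 (by omega) y hy' v hdyv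
    rw [ncard_eq _ inferInstance] at this
    rw [← this]
    have : u ∈ Finset.univ.filter (fun w => G.Adj v w ∧ G.dist y w = 2 - 1) :=
      Finset.mem_filter.mpr ⟨Finset.mem_univ _, huv.symm, hdyu⟩
    exact Finset.card_pos.mpr ⟨u, this⟩
  have hc2 : 1 ≤ Γ.c 2 := by
    have := Γ.hc 2 (by omega) x hx u hdxu
    rw [ncard_eq _ inferInstance] at this
    rw [← this]
    have : y ∈ Finset.univ.filter (fun w => G.Adj u w ∧ G.dist x w = 2 - 1) :=
      Finset.mem_filter.mpr ⟨Finset.mem_univ _, hyu.symm, hdxy⟩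
    exact Finset.card_pos.mpr ⟨y, this⟩
  have keyA : ∀ w ∈ A, (B.filter (fun z => G.Adj w z)).card = Γ.c' 2 - 1 := by
    intro w hw
    rw [hA, Finset.mem_filter] at hw
    obtain ⟨-, hxw, hyw2⟩ := hw
    set S : Finset V := Finset.univ.filter (fun z => G.Adj w z ∧ G.dist y z = 1) with hS
    have hScard : S.card = Γ.c' 2 := by
      have := Γ.hc' 2 (by omega) y hy' w hyw2
      rw [ncard_eq _ inferInstance] at this
      rw [hS, ← this]
    have hxS : x ∈ S := by
      rw [hS]; exact Finset.mem_filter.mpr ⟨Finset.mem_univ _, hxw.symm, hdyx⟩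
    have hw' : w ∈ Γ.Y' := (Γ.bip x w hxw).mp hx
    have heq : B.filter (fun z => G.Adj w z) = S.erase x := by
      ext z
      simp only [hB, hS, Finset.mem_filter, Finset.mem_erase, Finset.mem_univ, true_and]
      constructor
      · rintro ⟨⟨hyz, hxz2⟩, hwz⟩
        refine ⟨fun h => by rw [h] at hxz2; simp [SimpleGraph.dist_self] at hxz2, hwz,
          dist_eq_one_iff_adj.mpr hyz⟩
      · rintro ⟨hzx, hwz, hyz1⟩
        have hyz : G.Adj y z := dist_eq_one_iff_adj.mp hyz1
        have hz : z ∈ Γ.Y := by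
          rcases Γ.cover z with h | h
          · exact h
          · exact absurd ((Γ.bip y z hyz).mpr h) (fun hyY => Γ.disj y ⟨hyY, hy'⟩)
        refine ⟨⟨hyz, ?_⟩, hwz⟩
        have hle : G.dist x z ≤ 2 := by
          calc G.dist x z ≤ G.dist x w + G.dist w z := Γ.conn.dist_triangle
            _ ≤ 1 + 1 := by
                rw [dist_eq_one_iff_adj.mpr hxw, dist_eq_one_iff_adj.mpr hwz]
            _ = 2 := rfl
        have h0 : G.dist x z ≠ 0 := fun h => hzx (Γ.conn.dist_eq_zero_iff.mp h).symm
        have h1 : G.dist x z ≠ 1 := by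
          intro h
          have hxz : G.Adj x z := dist_eq_one_iff_adj.mp h
          exact Γ.disj z ⟨hz, (Γ.bip x z hxz).mp hx⟩
        omega
    rw [heq, Finset.card_erase_of_mem hxS, hScard]
  have keyB : ∀ z ∈ B, (A.filter (fun w => G.Adj z w)).card = Γ.c 2 - 1 := by
    intro z hz
    rw [hB, Finset.mem_filter] at hz
    obtain ⟨-, hyz, hxz2⟩ := hz
    set T : Finset V := Finset.univ.filter (fun w => G.Adj z w ∧ G.dist x w = 1) with hT
    have hTcard : T.card = Γ.c 2 := by
      have := Γ.hc 2 (by omega) x hx z hxz2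
      rw [ncard_eq _ inferInstance] at this
      rw [hT, ← this]
    have hyT : y ∈ T := by
      rw [hT]; exact Finset.mem_filter.mpr ⟨Finset.mem_univ _, hyz.symm, hdxy⟩
    have hz' : z ∈ Γ.Y := by
      rcases Γ.cover z with h | h
      · exact h
      · exact absurd ((Γ.bip y z hyz).mpr h) (fun hyY => Γ.disj y ⟨hyY, hy'⟩)
    have heq : A.filter (fun w => G.Adj z w) = T.erase y := by
      ext w
      simp only [hA, hT, Finset.mem_filter, Finset.mem_erase, Finset.mem_univ, true_and]
      constructor
      · rintro ⟨⟨hxw, hyw2⟩, hzw⟩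
        refine ⟨fun h => by rw [h] at hyw2; simp [SimpleGraph.dist_self] at hyw2, hzw,
          dist_eq_one_iff_adj.mpr hxw⟩
      · rintro ⟨hwy, hzw, hxw1⟩
        have hxw : G.Adj x w := dist_eq_one_iff_adj.mp hxw1
        have hw' : w ∈ Γ.Y' := (Γ.bip x w hxw).mp hx
        refine ⟨⟨hxw, ?_⟩, hzw⟩
        have hle : G.dist y w ≤ 2 := by
          calc G.dist y w ≤ G.dist y z + G.dist z w := Γ.conn.dist_triangle
            _ ≤ 1 + 1 := by
                rw [dist_eq_one_iff_adj.mpr hyz, dist_eq_one_iff_adj.mpr hzw]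
            _ = 2 := rfl
        have h0 : G.dist y w ≠ 0 := fun h => hwy (Γ.conn.dist_eq_zero_iff.mp h).symm
        have h1 : G.dist y w ≠ 1 := by
          intro h
          have hyw : G.Adj y w := dist_eq_one_iff_adj.mp h
          exact Γ.disj y ⟨(Γ.bip y w hyw).mpr hw', hy'⟩
        omega
    rw [heq, Finset.card_erase_of_mem hyT, hTcard]
  -- double counting
  have count : A.card * (Γ.c' 2 - 1) = B.card * (Γ.c 2 - 1) := by
    have e1 : ∑ w ∈ A, (B.filter (fun z => G.Adj w z)).card = A.card * (Γ.c' 2 - 1) := by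
      rw [Finset.sum_congr rfl keyA, Finset.sum_const, smul_eq_mul]
    have e2 : ∑ z ∈ B, (A.filter (fun w => G.Adj z w)).card = B.card * (Γ.c 2 - 1) := by
      rw [Finset.sum_congr rfl keyB, Finset.sum_const, smul_eq_mul]
    rw [← e1, ← e2]
    have : ∀ (s t : Finset V), ∑ w ∈ s, (t.filter (fun z => G.Adj w z)).card
        = ∑ w ∈ s, ∑ z ∈ t, if G.Adj w z then 1 else 0 := by
      intro s t
      refine Finset.sum_congr rfl fun w _ => ?_
      rw [Finset.card_filter]
    rw [this, this, Finset.sum_comm]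
    refine Finset.sum_congr rfl fun z _ => Finset.sum_congr rfl fun w _ => ?_
    simp [SimpleGraph.adj_comm]
  -- conclude
  rw [← hcardA, ← hcardB]
  have h1 : ((Γ.c 2 : ℤ)) - 1 = ((Γ.c 2 - 1 : ℕ) : ℤ) := by
    rw [Nat.cast_sub hc2]; push_cast; ring
  have h2 : ((Γ.c' 2 : ℤ)) - 1 = ((Γ.c' 2 - 1 : ℕ) : ℤ) := by
    rw [Nat.cast_sub hc'2]; push_cast; ring
  rw [h1, h2]
  exact_mod_cast count.symm
end

section
/- Let $\Gamma$ be a $(Y,Y')$-distance-biregular graph with $D \ge 3$ and $k' \ge 3$ (where $k'$ is the valency of vertices in $Y'$). For every integer $i$ with $1 \le i \le \min\{D-1, D'-1\}$ the quantity $\Delta_i$ is nonnegative, where $\Delta_i = (b_{i-1}-1)(c_{i+1}-1) - p^i_{2,i}(c'_2 - 1)$ if $i$ is even and $\Delta_i = (b'_{i-1}-1)(c'_{i+1}-1) - p^i_{2,i}(c'_2 - 1)$ if $i$ is odd. Here $p^i_{2,i} = |\Gamma_2(x) \cap \Gamma_i(z)|$ for $x \in Y$, $z \in \Gamma_i(x)$.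 -/
open SimpleGraph Set

/-- A `(Y,Y')`-distance-biregular graph: a finite connected bipartite graph in which
every vertex is distance-regularized, and vertices in the same color class share the
same intersection numbers (`c`, `b` for class `Y` and `c'`, `b'` for class `Y'`),
while the two color classes have different intersection arrays.
`D` (resp. `D'`) is the common eccentricity of vertices in `Y` (resp. `Y'`). -/


lemma walk_parity {V : Type} (G : SimpleGraph V) (Y Y' : V → Prop)
    (cover : ∀ v, Y v ∨ Y' v) (disj : ∀ v, ¬(Y v ∧ Y' v))
    (bip : ∀ u v, G.Adj u v → (Y u ↔ Y' v)) :
    ∀ {u v : V} (p : G.Walk u v), (Even p.length ↔ (Y u ↔ Y v)) := by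
  intro u v p
  induction p with
  | nil => simp
  | @cons a b c h q ih =>
    have hb' : Y a ↔ Y' b := bip a b h
    have hbY : Y b ↔ ¬ Y' b := by
      constructor
      · intro h1 h2; exact disj b ⟨h1, h2⟩
      · intro h1; rcases cover b with h2 | h2
        · exact h2
        · exact absurd h2 h1
    rw [SimpleGraph.Walk.length_cons, Nat.even_add_one, ih]
    tauto

lemma walk_inter {V : Type} (G : SimpleGraph V) :
    ∀ {u v : V} (p : G.Walk u v) (m : ℕ), m ≤ p.length →
      ∃ w, ∃ p1 : G.Walk u w, ∃ p2 : G.Walk w v,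
        p1.length ≤ m ∧ p2.length ≤ p.length - m := by
  intro u v p
  induction p with
  | nil =>
    intro m _
    exact ⟨_, SimpleGraph.Walk.nil, SimpleGraph.Walk.nil, by simp, by simp⟩
  | @cons a b c h q ih =>
    intro m hm
    match m with
    | 0 =>
      exact ⟨a, SimpleGraph.Walk.nil, SimpleGraph.Walk.cons h q, by simp, by simp⟩
    | m + 1 =>
      obtain ⟨w, p1, p2, hw1, hw2⟩ := ih m (by simpa [Nat.succ_le_succ_iff] using hm)
      refine ⟨w, SimpleGraph.Walk.cons h p1, p2, by simp only [SimpleGraph.Walk.length_cons]; omega, by simp only [SimpleGraph.Walk.length_cons]; omega⟩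

lemma dist_inter {V : Type} {G : SimpleGraph V} (hconn : G.Connected) {u v : V} {n : ℕ}
    (h : G.dist u v = n) (m : ℕ) (hm : m ≤ n) :
    ∃ w, G.dist u w = m ∧ G.dist w v = n - m := by
  obtain ⟨p, hp⟩ := hconn.exists_walk_length_eq_dist u v
  obtain ⟨w, p1, p2, hw1, hw2⟩ := walk_inter G p m (by omega)
  rw [hp, h] at hw2
  have d1 : G.dist u w ≤ m := le_trans (SimpleGraph.dist_le p1) hw1
  have d2 : G.dist w v ≤ n - m := le_trans (SimpleGraph.dist_le p2) hw2
  have h3 := hconn.dist_triangle (u := u) (v := w) (w := v)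
  rw [h] at h3
  exact ⟨w, by omega, by omega⟩

lemma ncard_eq_filter_card {V : Type} [Fintype V] (p : V → Prop) [DecidablePred p] :
    {w | p w}.ncard = (Finset.univ.filter p).card := by
  rw [Set.ncard_eq_toFinset_card']
  congr 1
  simp [Set.toFinset_setOf]

set_option maxHeartbeats 1000000 in
lemma key_lemma {V : Type} [Fintype V] {G : SimpleGraph V} (hconn : G.Connected)
    (Y Y' : Finset V)
    (cover : ∀ v, v ∈ Y ∨ v ∈ Y') (disj : ∀ v, ¬(v ∈ Y ∧ v ∈ Y'))
    (bip : ∀ u v, G.Adj u v → (u ∈ Y ↔ v ∈ Y'))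
    (c2 c2' : ℕ)
    (hc2 : ∀ x ∈ Y, ∀ z, G.dist x z = 2 → {w | G.Adj z w ∧ G.dist x w = 1}.ncard = c2)
    (hc2' : ∀ x ∈ Y', ∀ z, G.dist x z = 2 → {w | G.Adj z w ∧ G.dist x w = 1}.ncard = c2')
    (i : ℕ) (hi1 : 1 ≤ i)
    (x z : V) (hx : x ∈ Y) (hz : G.dist x z = i)
    (β γ : ℕ)
    (Hb : ∀ w, G.Adj x w → G.dist z w = i - 1 →
      {u | G.Adj w u ∧ G.dist z u = i}.ncard = β)
    (Hc : ∀ w, G.Adj x w → G.dist z w = i + 1 →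
      {u | G.Adj w u ∧ G.dist z u = i}.ncard = γ)
    (Hpar : ∀ w, G.Adj x w → G.dist z w ≠ i)
    (HW2 : ∃ w, G.Adj x w ∧ G.dist z w = i + 1) :
    ({w | G.dist x w = 2 ∧ G.dist z w = i}.ncard : ℤ) * ((c2' : ℤ) - 1)
      ≤ ((β : ℤ) - 1) * ((γ : ℤ) - 1) := by
  classical
  have hzx : G.dist z x = i := by rwa [SimpleGraph.dist_comm] at hz
  have hY' : ∀ w, G.Adj x w → w ∈ Y' := fun w hw => (bip x w hw).mp hx
  have hmemY : ∀ v, v ∈ Y' → v ∉ Y := fun v h1 h2 => disj v ⟨h2, h1⟩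
  have hYY' : ∀ u, u ∈ Y' → ∀ v, G.Adj u v → v ∈ Y := by
    intro u hu v huv
    rcases cover v with h | h
    · exact h
    · exact absurd ((bip u v huv).mpr h) (hmemY u hu)
  have hY'adj : ∀ u v, u ∈ Y' → v ∈ Y' → ¬ G.Adj u v := by
    intro u v hu hv hadj
    exact hmemY u hu ((bip u v hadj).mpr hv)
  have hadj1 : ∀ u v : V, G.Adj u v → G.dist u v = 1 :=
    fun u v h => SimpleGraph.dist_eq_one_iff_adj.mpr h
  -- distance-2 criterion
  have hdist2 : ∀ w u, G.Adj x w → G.Adj w u → u ≠ x → G.dist x u = 2 := by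
    intro w u hxw hwu hux
    have huY : u ∈ Y := hYY' w (hY' w hxw) u hwu
    have h1 : G.dist x u ≤ 2 := by
      have ht := hconn.dist_triangle (u := x) (v := w) (w := u)
      rw [hadj1 x w hxw, hadj1 w u hwu] at ht
      omega
    have hne1 : G.dist x u ≠ 1 := by
      intro hh
      have hadj : G.Adj x u := SimpleGraph.dist_eq_one_iff_adj.mp hh
      exact disj u ⟨huY, (bip x u hadj).mp hx⟩
    have hne0 : G.dist x u ≠ 0 := fun hh => hux (hconn.dist_eq_zero_iff.mp hh).symm
    omega
  -- the finsets
  set S : Finset V := Finset.univ.filter (fun w => G.dist x w = 2 ∧ G.dist z w = i) with hS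
  set W1 : Finset V := Finset.univ.filter (fun w => G.Adj x w ∧ G.dist z w = i - 1) with hW1
  set W2 : Finset V := Finset.univ.filter (fun w => G.Adj x w ∧ G.dist z w = i + 1) with hW2
  set s : V → ℕ := fun y => (W1.filter (fun w => G.Adj w y)).card with hs
  set t : V → ℕ := fun y => (W2.filter (fun w => G.Adj w y)).card with ht
  -- W1 and W2 are nonempty
  have hW1ne : W1.Nonempty := by
    obtain ⟨w, hw1, hw2⟩ := dist_inter hconn hzx (i - 1) (by omega)
    have hwd : G.dist w x = 1 := by rw [hw2]; omega
    have : G.Adj x w := (SimpleGraph.dist_eq_one_iff_adj.mp hwd).symm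
    exact ⟨w, by simp [hW1, this, hw1]⟩
  have hW2ne : W2.Nonempty := by
    obtain ⟨w, hw1, hw2⟩ := HW2
    exact ⟨w, by simp [hW2, hw1, hw2]⟩
  -- Claim 1 : s y + t y = c2 for y ∈ S
  have claim1 : ∀ y ∈ S, s y + t y = c2 := by
    intro y hy
    rw [hS, Finset.mem_filter] at hy
    obtain ⟨-, hxy2, hzyi⟩ := hy
    have hN := hc2 x hx y hxy2
    rw [ncard_eq_filter_card] at hN
    have hdisj : Disjoint (W1.filter (fun w => G.Adj w y)) (W2.filter (fun w => G.Adj w y)) := by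
      rw [Finset.disjoint_left]
      intro a ha1 ha2
      simp only [hW1, hW2, Finset.mem_filter, Finset.mem_univ, true_and] at ha1 ha2
      omega
    have hunion : W1.filter (fun w => G.Adj w y) ∪ W2.filter (fun w => G.Adj w y)
        = Finset.univ.filter (fun w => G.Adj y w ∧ G.dist x w = 1) := by
      ext w
      simp only [hW1, hW2, Finset.mem_union, Finset.mem_filter, Finset.mem_univ, true_and]
      constructor
      · rintro (⟨⟨h1, h2⟩, h3⟩ | ⟨⟨h1, h2⟩, h3⟩) <;> exact ⟨h3.symm, hadj1 x w h1⟩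
      · rintro ⟨h1, h2⟩
        have hxw : G.Adj x w := SimpleGraph.dist_eq_one_iff_adj.mp h2
        have hb1 : G.dist z w ≤ i + 1 := by
          have := hconn.dist_triangle (u := z) (v := y) (w := w)
          rw [hzyi, hadj1 y w h1] at this
          omega
        have hb2 : i ≤ G.dist z w + 1 := by
          have := hconn.dist_triangle (u := z) (v := w) (w := y)
          rw [hzyi, hadj1 w y h1.symm] at this
          omega
        have hb3 := Hpar w hxw
        have : G.dist z w = i - 1 ∨ G.dist z w = i + 1 := by omega
        rcases this with h | h
        · exact Or.inl ⟨⟨hxw, h⟩, h1.symm⟩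
        · exact Or.inr ⟨⟨hxw, h⟩, h1.symm⟩
    rw [hs, ht]
    rw [← Finset.card_union_of_disjoint hdisj, hunion, ← hN]
  -- per-w counts for claim 2
  have hperw : ∀ w ∈ W1, (S.filter (fun y => G.Adj w y)).card = β - 1 ∧ 1 ≤ β := by
    intro w hw
    rw [hW1, Finset.mem_filter] at hw
    obtain ⟨-, hxw, hzw⟩ := hw
    have hM := Hb w hxw hzw
    rw [ncard_eq_filter_card] at hM
    set M := Finset.univ.filter (fun u => G.Adj w u ∧ G.dist z u = i) with hMdef
    have hxM : x ∈ M := by simp [hMdef, hxw.symm, hzx]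
    have heq : S.filter (fun y => G.Adj w y) = M.erase x := by
      ext u
      simp only [hS, hMdef, Finset.mem_filter, Finset.mem_erase, Finset.mem_univ, true_and]
      constructor
      · rintro ⟨⟨h1, h2⟩, h3⟩
        refine ⟨fun e => ?_, h3, h2⟩
        rw [e] at h1
        simp [SimpleGraph.dist_self] at h1
      · rintro ⟨h1, h2, h3⟩
        exact ⟨⟨hdist2 w u hxw h2 h1, h3⟩, h2⟩
    have hβ : 1 ≤ β := by
      rw [← hM]
      exact Finset.card_pos.mpr ⟨x, hxM⟩
    rw [heq, Finset.card_erase_of_mem hxM, hM]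
    exact ⟨rfl, hβ⟩
  have hβ : 1 ≤ β := (hperw hW1ne.choose hW1ne.choose_spec).2
  have hsum_s : ∑ y ∈ S, s y = W1.card * (β - 1) := by
    calc ∑ y ∈ S, s y = ∑ y ∈ S, ∑ w ∈ W1, if G.Adj w y then 1 else 0 :=
          Finset.sum_congr rfl (fun y _ => Finset.card_filter _ _)
      _ = ∑ w ∈ W1, ∑ y ∈ S, if G.Adj w y then 1 else 0 := Finset.sum_comm
      _ = ∑ w ∈ W1, (S.filter (fun y => G.Adj w y)).card :=
          Finset.sum_congr rfl (fun w _ => (Finset.card_filter _ _).symm)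
      _ = ∑ w ∈ W1, (β - 1) := Finset.sum_congr rfl (fun w hw => (hperw w hw).1)
      _ = W1.card * (β - 1) := by rw [Finset.sum_const, smul_eq_mul]
  -- per-w counts for claim 3
  have hperw2 : ∀ w ∈ W2, (S.filter (fun y => G.Adj w y)).card = γ - 1 ∧ 1 ≤ γ := by
    intro w hw
    rw [hW2, Finset.mem_filter] at hw
    obtain ⟨-, hxw, hzw⟩ := hw
    have hM := Hc w hxw hzw
    rw [ncard_eq_filter_card] at hM
    set M := Finset.univ.filter (fun u => G.Adj w u ∧ G.dist z u = i) with hMdef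
    have hxM : x ∈ M := by simp [hMdef, hxw.symm, hzx]
    have heq : S.filter (fun y => G.Adj w y) = M.erase x := by
      ext u
      simp only [hS, hMdef, Finset.mem_filter, Finset.mem_erase, Finset.mem_univ, true_and]
      constructor
      · rintro ⟨⟨h1, h2⟩, h3⟩
        refine ⟨fun e => ?_, h3, h2⟩
        rw [e] at h1
        simp [SimpleGraph.dist_self] at h1
      · rintro ⟨h1, h2, h3⟩
        exact ⟨⟨hdist2 w u hxw h2 h1, h3⟩, h2⟩
    have hγ : 1 ≤ γ := by
      rw [← hM]
      exact Finset.card_pos.mpr ⟨x, hxM⟩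
    rw [heq, Finset.card_erase_of_mem hxM, hM]
    exact ⟨rfl, hγ⟩
  have hγ : 1 ≤ γ := (hperw2 hW2ne.choose hW2ne.choose_spec).2
  have hsum_t : ∑ y ∈ S, t y = W2.card * (γ - 1) := by
    calc ∑ y ∈ S, t y = ∑ y ∈ S, ∑ w ∈ W2, if G.Adj w y then 1 else 0 :=
          Finset.sum_congr rfl (fun y _ => Finset.card_filter _ _)
      _ = ∑ w ∈ W2, ∑ y ∈ S, if G.Adj w y then 1 else 0 := Finset.sum_comm
      _ = ∑ w ∈ W2, (S.filter (fun y => G.Adj w y)).card :=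
          Finset.sum_congr rfl (fun w _ => (Finset.card_filter _ _).symm)
      _ = ∑ w ∈ W2, (γ - 1) := Finset.sum_congr rfl (fun w hw => (hperw2 w hw).1)
      _ = W2.card * (γ - 1) := by rw [Finset.sum_const, smul_eq_mul]
  -- per-pair counts for claim 4
  have hperpair : ∀ w ∈ W1, ∀ w' ∈ W2,
      (S.filter (fun y => G.Adj w y ∧ G.Adj w' y)).card = c2' - 1 ∧ 1 ≤ c2' := by
    intro w hw w' hw'
    rw [hW1, Finset.mem_filter] at hw
    obtain ⟨-, hxw, hzw⟩ := hw
    rw [hW2, Finset.mem_filter] at hw'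
    obtain ⟨-, hxw', hzw'⟩ := hw'
    have hww2 : G.dist w w' = 2 := by
      have h1 : G.dist w w' ≤ 2 := by
        have := hconn.dist_triangle (u := w) (v := x) (w := w')
        rw [hadj1 w x hxw.symm, hadj1 x w' hxw'] at this
        omega
      have hne0 : G.dist w w' ≠ 0 := by
        intro hh
        have : w = w' := hconn.dist_eq_zero_iff.mp hh
        rw [this, hzw'] at hzw
        omega
      have hne1 : G.dist w w' ≠ 1 := by
        intro hh
        exact hY'adj w w' (hY' w hxw) (hY' w' hxw') (SimpleGraph.dist_eq_one_iff_adj.mp hh)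
      omega
    have hC := hc2' w (hY' w hxw) w' hww2
    rw [ncard_eq_filter_card] at hC
    set C := Finset.univ.filter (fun u => G.Adj w' u ∧ G.dist w u = 1) with hCdef
    have hxC : x ∈ C := by simp [hCdef, hxw'.symm, hxw.symm]
    have heq : S.filter (fun y => G.Adj w y ∧ G.Adj w' y) = C.erase x := by
      ext u
      simp only [hS, hCdef, Finset.mem_filter, Finset.mem_erase, Finset.mem_univ, true_and]
      constructor
      · rintro ⟨⟨h1, h2⟩, h3, h4⟩
        refine ⟨fun e => ?_, h4, hadj1 w u h3⟩
        rw [e] at h1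
        simp [SimpleGraph.dist_self] at h1
      · rintro ⟨h1, h2, h3⟩
        have hwu : G.Adj w u := SimpleGraph.dist_eq_one_iff_adj.mp h3
        have hd2 : G.dist x u = 2 := hdist2 w u hxw hwu h1
        have hzu : G.dist z u = i := by
          have hle : G.dist z u ≤ i := by
            have := hconn.dist_triangle (u := z) (v := w) (w := u)
            rw [hzw, h3] at this
            omega
          have hge : i + 1 ≤ G.dist z u + 1 := by
            have := hconn.dist_triangle (u := z) (v := u) (w := w')
            rw [hzw', hadj1 u w' h2.symm] at this
            omega
          omega
        exact ⟨⟨hd2, hzu⟩, hwu, h2⟩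
    have hc2'1 : 1 ≤ c2' := by
      rw [← hC]
      exact Finset.card_pos.mpr ⟨x, hxC⟩
    rw [heq, Finset.card_erase_of_mem hxC, hC]
    exact ⟨rfl, hc2'1⟩
  have hc2'1 : 1 ≤ c2' :=
    (hperpair hW1ne.choose hW1ne.choose_spec hW2ne.choose hW2ne.choose_spec).2
  have hsum_st : ∑ y ∈ S, s y * t y = W1.card * (W2.card * (c2' - 1)) := by
    have hrepr : ∀ y, s y * t y
        = ∑ w ∈ W1, ∑ w' ∈ W2, if G.Adj w y ∧ G.Adj w' y then 1 else 0 := by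
      intro y
      calc s y * t y
          = (∑ w ∈ W1, if G.Adj w y then 1 else 0) *
            (∑ w' ∈ W2, if G.Adj w' y then 1 else 0) := by
            simp only [hs, ht, Finset.card_filter]
        _ = ∑ w ∈ W1, ∑ w' ∈ W2,
              (if G.Adj w y then 1 else 0) * (if G.Adj w' y then 1 else 0) :=
            Finset.sum_mul_sum _ _ _ _
        _ = ∑ w ∈ W1, ∑ w' ∈ W2, if G.Adj w y ∧ G.Adj w' y then 1 else 0 := by
            refine Finset.sum_congr rfl fun w _ => Finset.sum_congr rfl fun w' _ => ?_
            by_cases h1 : G.Adj w y <;> by_cases h2 : G.Adj w' y <;> simp [h1, h2]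
    calc ∑ y ∈ S, s y * t y
        = ∑ y ∈ S, ∑ w ∈ W1, ∑ w' ∈ W2, if G.Adj w y ∧ G.Adj w' y then 1 else 0 :=
          Finset.sum_congr rfl (fun y _ => hrepr y)
      _ = ∑ w ∈ W1, ∑ y ∈ S, ∑ w' ∈ W2, if G.Adj w y ∧ G.Adj w' y then 1 else 0 :=
          Finset.sum_comm
      _ = ∑ w ∈ W1, ∑ w' ∈ W2, ∑ y ∈ S, if G.Adj w y ∧ G.Adj w' y then 1 else 0 :=
          Finset.sum_congr rfl (fun w _ => Finset.sum_comm)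
      _ = ∑ w ∈ W1, ∑ w' ∈ W2, (S.filter (fun y => G.Adj w y ∧ G.Adj w' y)).card :=
          Finset.sum_congr rfl (fun w _ => Finset.sum_congr rfl
            (fun w' _ => (Finset.card_filter _ _).symm))
      _ = ∑ w ∈ W1, ∑ w' ∈ W2, (c2' - 1) :=
          Finset.sum_congr rfl (fun w hw => Finset.sum_congr rfl
            (fun w' hw' => (hperpair w hw w' hw').1))
      _ = W1.card * (W2.card * (c2' - 1)) := by
          rw [Finset.sum_const, smul_eq_mul, Finset.sum_const, smul_eq_mul]
  -- cast everything to ℤ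
  have hncard : ({w | G.dist x w = 2 ∧ G.dist z w = i}.ncard) = S.card := by
    rw [ncard_eq_filter_card]
  have E0 : ∀ y ∈ S, (t y : ℤ) = (c2 : ℤ) - (s y : ℤ) := by
    intro y hy
    have := claim1 y hy
    omega
  have E1 : (∑ y ∈ S, (s y : ℤ)) = (W1.card : ℤ) * ((β : ℤ) - 1) := by
    have h := congrArg (fun m : ℕ => (m : ℤ)) hsum_s
    push_cast [Nat.cast_sub hβ] at h
    simpa using h
  have E2 : (∑ y ∈ S, (t y : ℤ)) = (W2.card : ℤ) * ((γ : ℤ) - 1) := by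
    have h := congrArg (fun m : ℕ => (m : ℤ)) hsum_t
    push_cast [Nat.cast_sub hγ] at h
    simpa using h
  have E3 : (∑ y ∈ S, (s y : ℤ) * (t y : ℤ))
      = (W1.card : ℤ) * ((W2.card : ℤ) * ((c2' : ℤ) - 1)) := by
    have h := congrArg (fun m : ℕ => (m : ℤ)) hsum_st
    push_cast [Nat.cast_sub hc2'1] at h
    simpa using h
  have CS : (∑ y ∈ S, (s y : ℤ)) ^ 2 ≤ (S.card : ℤ) * ∑ y ∈ S, (s y : ℤ) ^ 2 :=
    sq_sum_le_card_mul_sum_sq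
  have hsum_t_eq : ∑ y ∈ S, (t y : ℤ) = (S.card : ℤ) * (c2 : ℤ) - ∑ y ∈ S, (s y : ℤ) := by
    rw [Finset.sum_congr rfl E0, Finset.sum_sub_distrib, Finset.sum_const, nsmul_eq_mul]
  have hsum_st_eq : ∑ y ∈ S, (s y : ℤ) * (t y : ℤ)
      = (c2 : ℤ) * (∑ y ∈ S, (s y : ℤ)) - ∑ y ∈ S, (s y : ℤ) ^ 2 := by
    have : ∀ y ∈ S, (s y : ℤ) * (t y : ℤ) = (c2 : ℤ) * (s y : ℤ) - (s y : ℤ) ^ 2 := by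
      intro y hy
      rw [E0 y hy]
      ring
    rw [Finset.sum_congr rfl this, Finset.sum_sub_distrib, Finset.mul_sum]
  have big : (S.card : ℤ) * ((W1.card : ℤ) * ((W2.card : ℤ) * ((c2' : ℤ) - 1)))
      ≤ (W1.card : ℤ) * ((β : ℤ) - 1) * ((W2.card : ℤ) * ((γ : ℤ) - 1)) := by
    rw [← E1, ← E2, ← E3, hsum_t_eq, hsum_st_eq]
    nlinarith [CS]
  have hA : (1 : ℤ) ≤ (W1.card : ℤ) := by
    exact_mod_cast Finset.card_pos.mpr hW1ne
  have hB : (1 : ℤ) ≤ (W2.card : ℤ) := by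
    exact_mod_cast Finset.card_pos.mpr hW2ne
  have hpos : (0 : ℤ) < (W1.card : ℤ) * (W2.card : ℤ) := by nlinarith
  rw [hncard]
  refine le_of_mul_le_mul_left ?_ hpos
  nlinarith [big]

theorem stmt_7 {V : Type} [Fintype V] (Γ : DBRG V) (hk' : 3 ≤ Γ.b' 0) (hD : 3 ≤ Γ.D)
    (i : ℕ) (hi1 : 1 ≤ i) (hi2 : i ≤ min (Γ.D - 1) (Γ.D' - 1))
    (x : V) (hx : x ∈ Γ.Y) (z : V) (hz : Γ.G.dist x z = i)
    (p : ℕ) (hp : p = {w | Γ.G.dist x w = 2 ∧ Γ.G.dist z w = i}.ncard) :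
    0 ≤ (if Even i then ((Γ.b (i - 1) : ℤ) - 1) * ((Γ.c (i + 1) : ℤ) - 1)
          else ((Γ.b' (i - 1) : ℤ) - 1) * ((Γ.c' (i + 1) : ℤ) - 1))
        - (p : ℤ) * ((Γ.c' 2 : ℤ) - 1) := by
  have hconn := Γ.conn
  have hpar : ∀ u v : V, Even (Γ.G.dist u v) ↔ ((u ∈ Γ.Y) ↔ (v ∈ Γ.Y)) := by
    intro u v
    obtain ⟨q, hq⟩ := Γ.conn.exists_walk_length_eq_dist u v
    rw [← hq]
    exact walk_parity Γ.G (· ∈ Γ.Y) (· ∈ Γ.Y') Γ.cover Γ.disj Γ.bip q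
  have hiD : i ≤ Γ.D - 1 := le_trans hi2 (min_le_left _ _)
  have hiD' : i ≤ Γ.D' - 1 := le_trans hi2 (min_le_right _ _)
  have hzx : Γ.G.dist z x = i := by rwa [SimpleGraph.dist_comm] at hz
  have hc2 : ∀ a ∈ Γ.Y, ∀ b, Γ.G.dist a b = 2 →
      {w | Γ.G.Adj b w ∧ Γ.G.dist a w = 1}.ncard = Γ.c 2 := by
    intro a ha b hb
    have h := Γ.hc 2 (by norm_num) a ha b hb
    simpa using h
  have hc2' : ∀ a ∈ Γ.Y', ∀ b, Γ.G.dist a b = 2 →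
      {w | Γ.G.Adj b w ∧ Γ.G.dist a w = 1}.ncard = Γ.c' 2 := by
    intro a ha b hb
    have h := Γ.hc' 2 (by norm_num) a ha b hb
    simpa using h
  rcases Nat.even_or_odd i with he | ho
  · -- even case : z ∈ Y
    have hzY : z ∈ Γ.Y := by
      have h := hpar x z
      rw [hz] at h
      exact (h.mp he).mp hx
    have Hb : ∀ w, Γ.G.Adj x w → Γ.G.dist z w = i - 1 →
        {u | Γ.G.Adj w u ∧ Γ.G.dist z u = i}.ncard = Γ.b (i-1) := by
      intro w _ hdzw
      have h := Γ.hb (i-1) z hzY w hdzw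
      have e : i - 1 + 1 = i := by omega
      rw [e] at h
      exact h
    have Hc : ∀ w, Γ.G.Adj x w → Γ.G.dist z w = i + 1 →
        {u | Γ.G.Adj w u ∧ Γ.G.dist z u = i}.ncard = Γ.c (i+1) := by
      intro w _ hdzw
      have h := Γ.hc (i+1) (by omega) z hzY w hdzw
      have e : i + 1 - 1 = i := by omega
      rw [e] at h
      exact h
    have Hpar : ∀ w, Γ.G.Adj x w → Γ.G.dist z w ≠ i := by
      intro w hw hdzw
      have hwY' : w ∈ Γ.Y' := (Γ.bip x w hw).mp hx
      have hwY : w ∉ Γ.Y := fun h => Γ.disj w ⟨h, hwY'⟩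
      have h := hpar z w
      rw [hdzw] at h
      exact hwY ((h.mp he).mp hzY)
    have HW2 : ∃ w, Γ.G.Adj x w ∧ Γ.G.dist z w = i + 1 := by
      obtain ⟨y0, hy0⟩ := (Γ.eccY z hzY).1
      obtain ⟨u, hu1, hu2⟩ := dist_inter hconn hy0 (i+1) (by omega)
      obtain ⟨x0, hx01, hx02⟩ := dist_inter hconn hu1 i (by omega)
      have e1 : i + 1 - i = 1 := by omega
      rw [e1] at hx02
      have hadj : Γ.G.Adj x0 u := SimpleGraph.dist_eq_one_iff_adj.mp hx02
      have h1 := Γ.hb i z hzY x0 hx01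
      have hbi : Γ.b i ≠ 0 := by
        rw [← h1]
        have hmem : u ∈ {w | Γ.G.Adj x0 w ∧ Γ.G.dist z w = i + 1} := ⟨hadj, hu1⟩
        have hpos := (Set.ncard_pos (Set.toFinite _)).mpr ⟨u, hmem⟩
        omega
      have h2 := Γ.hb i z hzY x hzx
      obtain ⟨w, hw1, hw2⟩ := Set.nonempty_of_ncard_ne_zero (by rw [h2]; exact hbi)
      exact ⟨w, hw1, hw2⟩
    have key := key_lemma hconn Γ.Y Γ.Y' Γ.cover Γ.disj Γ.bip (Γ.c 2) (Γ.c' 2) hc2 hc2'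
      i hi1 x z hx hz (Γ.b (i-1)) (Γ.c (i+1)) Hb Hc Hpar HW2
    rw [if_pos he, hp]
    linarith [key]
  · -- odd case : z ∈ Y'
    have hne : ¬ Even i := Nat.not_even_iff_odd.mpr ho
    have hzYn : z ∉ Γ.Y := by
      intro hzY
      have h := hpar x z
      rw [hz] at h
      exact hne (h.mpr ⟨fun _ => hzY, fun _ => hx⟩)
    have hzY' : z ∈ Γ.Y' := by
      rcases Γ.cover z with h' | h'
      · exact absurd h' hzYn
      · exact h'
    have Hb : ∀ w, Γ.G.Adj x w → Γ.G.dist z w = i - 1 →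
        {u | Γ.G.Adj w u ∧ Γ.G.dist z u = i}.ncard = Γ.b' (i-1) := by
      intro w _ hdzw
      have h := Γ.hb' (i-1) z hzY' w hdzw
      have e : i - 1 + 1 = i := by omega
      rw [e] at h
      exact h
    have Hc : ∀ w, Γ.G.Adj x w → Γ.G.dist z w = i + 1 →
        {u | Γ.G.Adj w u ∧ Γ.G.dist z u = i}.ncard = Γ.c' (i+1) := by
      intro w _ hdzw
      have h := Γ.hc' (i+1) (by omega) z hzY' w hdzw
      have e : i + 1 - 1 = i := by omega
      rw [e] at h
      exact h
    have Hpar : ∀ w, Γ.G.Adj x w → Γ.G.dist z w ≠ i := by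
      intro w hw hdzw
      have hwY' : w ∈ Γ.Y' := (Γ.bip x w hw).mp hx
      have hwY : w ∉ Γ.Y := fun h => Γ.disj w ⟨h, hwY'⟩
      have h := hpar z w
      rw [hdzw] at h
      exact hne (h.mpr (iff_of_false hzYn hwY))
    have HW2 : ∃ w, Γ.G.Adj x w ∧ Γ.G.dist z w = i + 1 := by
      obtain ⟨y0, hy0⟩ := (Γ.eccY' z hzY').1
      obtain ⟨u, hu1, hu2⟩ := dist_inter hconn hy0 (i+1) (by omega)
      obtain ⟨x0, hx01, hx02⟩ := dist_inter hconn hu1 i (by omega)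
      have e1 : i + 1 - i = 1 := by omega
      rw [e1] at hx02
      have hadj : Γ.G.Adj x0 u := SimpleGraph.dist_eq_one_iff_adj.mp hx02
      have h1 := Γ.hb' i z hzY' x0 hx01
      have hbi : Γ.b' i ≠ 0 := by
        rw [← h1]
        have hmem : u ∈ {w | Γ.G.Adj x0 w ∧ Γ.G.dist z w = i + 1} := ⟨hadj, hu1⟩
        have hpos := (Set.ncard_pos (Set.toFinite _)).mpr ⟨u, hmem⟩
        omega
      have h2 := Γ.hb' i z hzY' x hzx
      obtain ⟨w, hw1, hw2⟩ := Set.nonempty_of_ncard_ne_zero (by rw [h2]; exact hbi)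
      exact ⟨w, hw1, hw2⟩
    have key := key_lemma hconn Γ.Y Γ.Y' Γ.cover Γ.disj Γ.bip (Γ.c 2) (Γ.c' 2) hc2 hc2'
      i hi1 x z hx hz (Γ.b' (i-1)) (Γ.c' (i+1)) Hb Hc Hpar HW2
    rw [if_neg hne, hp]
    linarith [key]
end

section
/- Let $\Gamma$ be a $(Y,Y')$-distance-biregular graph with $D \ge 3$ and $D$ even. Then $p^2_{D,D} = 0$ if and only if $b_{D-1} = 1$, where $p^2_{D,D} = |\Gamma_D(x) \cap \Gamma_D(y)|$ for $x \in Y$, $y \in \Gamma_2(x)$, and $b_{D-1}$ is an intersection number of the color class $Y$. -/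
open SimpleGraph Set

namespace DBRGaux

variable {V : Type} [Fintype V]

lemma double_count (A B : Set V) (R : V → V → Prop) (a b : ℕ)
    (hA : ∀ w ∈ A, {z | z ∈ B ∧ R w z}.ncard = a)
    (hB : ∀ z ∈ B, {w | w ∈ A ∧ R w z}.ncard = b) :
    a * A.ncard = b * B.ncard := by
  classical
  have hAf := A.toFinite
  have hBf := B.toFinite
  have eA : ∀ w ∈ hAf.toFinset, (hBf.toFinset.filter (fun z => R w z)).card = a := by
    intro w hw
    rw [← hA w (hAf.mem_toFinset.mp hw), ← Set.ncard_coe_finset]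
    congr 1
    ext z
    simp [Set.Finite.mem_toFinset, Set.mem_ofPred]
  have eB : ∀ z ∈ hBf.toFinset, (hAf.toFinset.filter (fun w => R w z)).card = b := by
    intro z hz
    rw [← hB z (hBf.mem_toFinset.mp hz), ← Set.ncard_coe_finset]
    congr 1
    ext w
    simp [Set.Finite.mem_toFinset, Set.mem_ofPred]
  calc a * A.ncard = ∑ w ∈ hAf.toFinset, (hBf.toFinset.filter (fun z => R w z)).card := by
        rw [Finset.sum_congr rfl eA, Finset.sum_const, smul_eq_mul,
          Set.ncard_eq_toFinset_card _ hAf, mul_comm]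
    _ = ∑ w ∈ hAf.toFinset, ∑ z ∈ hBf.toFinset, if R w z then 1 else 0 := by
        refine Finset.sum_congr rfl fun w _ => ?_
        rw [Finset.card_filter]
    _ = ∑ z ∈ hBf.toFinset, ∑ w ∈ hAf.toFinset, if R w z then 1 else 0 := Finset.sum_comm
    _ = ∑ z ∈ hBf.toFinset, (hAf.toFinset.filter (fun w => R w z)).card := by
        refine Finset.sum_congr rfl fun z _ => ?_
        rw [Finset.card_filter]
    _ = b * B.ncard := by
        rw [Finset.sum_congr rfl eB, Finset.sum_const, smul_eq_mul,
          Set.ncard_eq_toFinset_card _ hBf, mul_comm]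

variable (Γ : DBRG V)

lemma adj_mem_iff {u v : V} (h : Γ.G.Adj u v) : u ∈ Γ.Y ↔ v ∉ Γ.Y := by
  have h1 := Γ.bip u v h
  have h2 := Γ.cover v
  have h3 := Γ.disj v
  tauto

lemma walk_parity {u v : V} (W : Γ.G.Walk u v) :
    v ∈ Γ.Y ↔ (u ∈ Γ.Y ↔ Even W.length) := by
  induction W with
  | nil => simp
  | @cons u w v h p ih =>
      have h1 := adj_mem_iff Γ h
      simp only [Walk.length_cons, Nat.even_add_one]
      tauto

lemma dist_parity {u v : V} (hu : u ∈ Γ.Y) : v ∈ Γ.Y ↔ Even (Γ.G.dist u v) := by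
  obtain ⟨W, hW⟩ := (Γ.conn u v).exists_walk_length_eq_dist
  have h := walk_parity Γ W
  rw [hW] at h
  tauto

lemma dist_getVert_le {u v : V} (W : Γ.G.Walk u v) (j : ℕ) :
    Γ.G.dist u (W.getVert j) ≤ j := by
  induction j with
  | zero => simp [W.getVert_zero, SimpleGraph.dist_self]
  | succ n ih =>
      by_cases h : n < W.length
      · have hadj := W.adj_getVert_succ h
        have ht : Γ.G.dist u (W.getVert (n+1)) ≤
            Γ.G.dist u (W.getVert n) + Γ.G.dist (W.getVert n) (W.getVert (n+1)) :=
          Γ.conn.dist_triangle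
        have hd1 : Γ.G.dist (W.getVert n) (W.getVert (n+1)) = 1 :=
          dist_eq_one_iff_adj.mpr hadj
        omega
      · have e1 : W.getVert (n+1) = v := W.getVert_of_length_le (by omega)
        have e2 : W.getVert n = v := W.getVert_of_length_le (by omega)
        rw [e1, ← e2]
        omega

lemma dist_getVert_eq {u v : V} (W : Γ.G.Walk u v) (hW : W.length = Γ.G.dist u v)
    {j : ℕ} (hj : j ≤ W.length) : Γ.G.dist u (W.getVert j) = j := by
  have h1 := dist_getVert_le Γ W j
  have h2 := dist_getVert_le Γ W.reverse (W.length - j)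
  rw [W.getVert_reverse] at h2
  have hjj : W.length - (W.length - j) = j := by omega
  rw [hjj] at h2
  rw [SimpleGraph.dist_comm] at h2
  have h3 : Γ.G.dist u v ≤ Γ.G.dist u (W.getVert j) + Γ.G.dist (W.getVert j) v :=
    Γ.conn.dist_triangle
  omega

lemma exists_chain {x : V} (hx : x ∈ Γ.Y) {j : ℕ} (hj : j < Γ.D) :
    ∃ z w, Γ.G.dist x z = j ∧ Γ.G.dist x w = j + 1 ∧ Γ.G.Adj z w := by
  obtain ⟨⟨y0, hy0⟩, -⟩ := Γ.eccY x hx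
  obtain ⟨W, hWl⟩ := (Γ.conn x y0).exists_walk_length_eq_dist
  have hL : W.length = Γ.D := by rw [hWl, hy0]
  refine ⟨W.getVert j, W.getVert (j+1), ?_, ?_, ?_⟩
  · exact dist_getVert_eq Γ W hWl (by omega)
  · exact dist_getVert_eq Γ W hWl (by omega)
  · exact W.adj_getVert_succ (by omega)

lemma exists_dist {x : V} (hx : x ∈ Γ.Y) {j : ℕ} (hj : j ≤ Γ.D) :
    ∃ z, Γ.G.dist x z = j := by
  obtain ⟨⟨y0, hy0⟩, -⟩ := Γ.eccY x hx
  obtain ⟨W, hWl⟩ := (Γ.conn x y0).exists_walk_length_eq_dist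
  have hL : W.length = Γ.D := by rw [hWl, hy0]
  exact ⟨W.getVert j, dist_getVert_eq Γ W hWl (by omega)⟩

lemma b_pos {x : V} (hx : x ∈ Γ.Y) {j : ℕ} (hj : j < Γ.D) : 0 < Γ.b j := by
  obtain ⟨z, w, hz, hw, hadj⟩ := exists_chain Γ hx hj
  rw [← Γ.hb j x hx z hz]
  exact (Set.ncard_pos (Set.toFinite _)).mpr ⟨w, hadj, hw⟩

lemma c_pos {x : V} (hx : x ∈ Γ.Y) {j : ℕ} (hj1 : 1 ≤ j) (hj2 : j ≤ Γ.D) : 0 < Γ.c j := by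
  obtain ⟨z, w, hz, hw, hadj⟩ := exists_chain Γ hx (j := j - 1) (by omega)
  have hw' : Γ.G.dist x w = j := by rw [hw]; omega
  rw [← Γ.hc j hj1 x hx w hw']
  refine (Set.ncard_pos (Set.toFinite _)).mpr ⟨z, hadj.symm, ?_⟩
  rw [hz]

lemma deg_Y {u : V} (hu : u ∈ Γ.Y) : {w | Γ.G.Adj u w}.ncard = Γ.b 0 := by
  rw [← Γ.hb 0 u hu u (SimpleGraph.dist_self)]
  congr 1
  ext w
  simp only [Set.mem_setOf_eq, zero_add]
  exact ⟨fun h => ⟨h, dist_eq_one_iff_adj.mpr h⟩, fun h => h.1⟩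

lemma deg_Y' {u : V} (hu : u ∈ Γ.Y') : {w | Γ.G.Adj u w}.ncard = Γ.b' 0 := by
  rw [← Γ.hb' 0 u hu u (SimpleGraph.dist_self)]
  congr 1
  ext w
  simp only [Set.mem_setOf_eq, zero_add]
  exact ⟨fun h => ⟨h, dist_eq_one_iff_adj.mpr h⟩, fun h => h.1⟩

lemma mem_Y'_of_not_Y {u : V} (hu : u ∉ Γ.Y) : u ∈ Γ.Y' := by
  have := Γ.cover u
  tauto

lemma c_one (hD : 1 ≤ Γ.D) {x : V} (hx : x ∈ Γ.Y) : Γ.c 1 = 1 := by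
  obtain ⟨z, w, hz, hw, hadj⟩ := exists_chain Γ hx (j := 0) (by omega)
  have hzx : z = x := ((Γ.conn.dist_eq_zero_iff).mp hz).symm
  rw [← Γ.hc 1 le_rfl x hx w (by rw [hw])]
  have hset : {w' | Γ.G.Adj w w' ∧ Γ.G.dist x w' = 1 - 1} = {x} := by
    ext w'
    simp only [Set.mem_setOf_eq, Set.mem_singleton_iff]
    constructor
    · intro ⟨_, h2⟩
      exact ((Γ.conn.dist_eq_zero_iff).mp h2).symm
    · intro h
      subst h
      subst hzx
      exact ⟨hadj.symm, SimpleGraph.dist_self⟩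
  rw [hset, Set.ncard_singleton]

lemma kprime (hD : 3 ≤ Γ.D) (hev : Even Γ.D) {x : V} (hx : x ∈ Γ.Y) :
    Γ.b' 0 = 1 + Γ.b 1 := by
  obtain ⟨u, hu⟩ := exists_dist Γ hx (j := 1) (by omega)
  have huY : u ∉ Γ.Y := by
    intro h
    have := (dist_parity Γ hx).mp h
    rw [hu] at this
    exact (Nat.not_even_iff_odd.mpr odd_one) this
  have huY' : u ∈ Γ.Y' := mem_Y'_of_not_Y Γ huY
  have hdeg := deg_Y' Γ huY'
  have hsplit : {w | Γ.G.Adj u w} =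
      {w | Γ.G.Adj u w ∧ Γ.G.dist x w = 0} ∪ {w | Γ.G.Adj u w ∧ Γ.G.dist x w = 2} := by
    ext w
    simp only [Set.mem_setOf_eq, Set.mem_union]
    constructor
    · intro h
      have h1 : Γ.G.dist x w ≤ Γ.G.dist x u + Γ.G.dist u w := Γ.conn.dist_triangle
      have h2 : Γ.G.dist u w = 1 := dist_eq_one_iff_adj.mpr h
      have hwY : w ∈ Γ.Y := by
        have := adj_mem_iff Γ h
        tauto
      have h3 : Even (Γ.G.dist x w) := (dist_parity Γ hx).mp hwY
      rw [Nat.even_iff] at h3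
      have : Γ.G.dist x w = 0 ∨ Γ.G.dist x w = 2 := by omega
      tauto
    · intro h
      tauto
  have hdisj : Disjoint {w | Γ.G.Adj u w ∧ Γ.G.dist x w = 0} {w | Γ.G.Adj u w ∧ Γ.G.dist x w = 2} := by
    rw [Set.disjoint_left]
    intro w h1 h2
    have := h1.2
    have := h2.2
    omega
  have hcard := Set.ncard_union_eq hdisj (Set.toFinite _) (Set.toFinite _)
  rw [← hsplit] at hcard
  have e1 : {w | Γ.G.Adj u w ∧ Γ.G.dist x w = 0}.ncard = Γ.c 1 := by
    rw [← Γ.hc 1 le_rfl x hx u hu]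
  have e2 : {w | Γ.G.Adj u w ∧ Γ.G.dist x w = 2}.ncard = Γ.b 1 := by
    rw [← Γ.hb 1 x hx u hu]
  rw [hdeg, e1, e2, c_one Γ (by omega) hx] at hcard
  exact hcard

lemma cD_eq_b0 (hD : 3 ≤ Γ.D) (hev : Even Γ.D) {x : V} (hx : x ∈ Γ.Y) :
    Γ.c Γ.D = Γ.b 0 := by
  obtain ⟨z, hz⟩ := exists_dist Γ hx (j := Γ.D) le_rfl
  have hzY : z ∈ Γ.Y := (dist_parity Γ hx).mpr (by rw [hz]; exact hev)
  have hdeg := deg_Y Γ hzY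
  have hset : {w | Γ.G.Adj z w ∧ Γ.G.dist x w = Γ.D - 1} = {w | Γ.G.Adj z w} := by
    ext w
    simp only [Set.mem_setOf_eq]
    constructor
    · intro h; exact h.1
    · intro h
      refine ⟨h, ?_⟩
      have h1 : Γ.G.dist x w ≤ Γ.D := (Γ.eccY x hx).2 w
      have h2 : Γ.G.dist x z ≤ Γ.G.dist x w + Γ.G.dist w z := Γ.conn.dist_triangle
      have h3 : Γ.G.dist w z = 1 := dist_eq_one_iff_adj.mpr h.symm
      have hwY : w ∉ Γ.Y := (adj_mem_iff Γ h).mp hzY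
      have h4 : ¬ Even (Γ.G.dist x w) := fun he => hwY ((dist_parity Γ hx).mpr he)
      rw [Nat.even_iff] at h4
      rw [Nat.even_iff] at hev
      omega
  rw [← Γ.hc Γ.D (by omega) x hx z hz, hset, hdeg]

lemma cb_Dm1 (hD : 3 ≤ Γ.D) (hev : Even Γ.D) {x : V} (hx : x ∈ Γ.Y) :
    Γ.c (Γ.D - 1) + Γ.b (Γ.D - 1) = Γ.b' 0 := by
  obtain ⟨w, hw⟩ := exists_dist Γ hx (j := Γ.D - 1) (by omega)
  have hwY : w ∉ Γ.Y := by
    intro h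
    have := (dist_parity Γ hx).mp h
    rw [hw, Nat.even_iff] at this
    rw [Nat.even_iff] at hev
    omega
  have hwY' : w ∈ Γ.Y' := mem_Y'_of_not_Y Γ hwY
  have hdeg := deg_Y' Γ hwY'
  have hsplit : {u | Γ.G.Adj w u} =
      {u | Γ.G.Adj w u ∧ Γ.G.dist x u = Γ.D - 2} ∪ {u | Γ.G.Adj w u ∧ Γ.G.dist x u = Γ.D} := by
    ext u
    simp only [Set.mem_setOf_eq, Set.mem_union]
    constructor
    · intro h
      have h1 : Γ.G.dist x u ≤ Γ.D := (Γ.eccY x hx).2 u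
      have h2 : Γ.G.dist x w ≤ Γ.G.dist x u + Γ.G.dist u w := Γ.conn.dist_triangle
      have h3 : Γ.G.dist u w = 1 := dist_eq_one_iff_adj.mpr h.symm
      have huY : u ∈ Γ.Y := by
        have := adj_mem_iff Γ h
        tauto
      have h4 : Even (Γ.G.dist x u) := (dist_parity Γ hx).mp huY
      rw [Nat.even_iff] at h4
      rw [Nat.even_iff] at hev
      have : Γ.G.dist x u = Γ.D - 2 ∨ Γ.G.dist x u = Γ.D := by omega
      tauto
    · intro h
      tauto
  have hdisj : Disjoint {u | Γ.G.Adj w u ∧ Γ.G.dist x u = Γ.D - 2}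
      {u | Γ.G.Adj w u ∧ Γ.G.dist x u = Γ.D} := by
    rw [Set.disjoint_left]
    intro u h1 h2
    have := h1.2
    have := h2.2
    omega
  have hcard := Set.ncard_union_eq hdisj (Set.toFinite _) (Set.toFinite _)
  rw [← hsplit] at hcard
  have e1 : {u | Γ.G.Adj w u ∧ Γ.G.dist x u = Γ.D - 2}.ncard = Γ.c (Γ.D - 1) := by
    have h12 : Γ.D - 1 - 1 = Γ.D - 2 := by omega
    rw [← Γ.hc (Γ.D - 1) (by omega) x hx w hw, h12]
  have e2 : {u | Γ.G.Adj w u ∧ Γ.G.dist x u = Γ.D}.ncard = Γ.b (Γ.D - 1) := by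
    have h12 : Γ.D - 1 + 1 = Γ.D := by omega
    rw [← Γ.hb (Γ.D - 1) x hx w hw, h12]
  rw [hdeg, e1, e2] at hcard
  exact hcard.symm

lemma k_rec {x : V} (hx : x ∈ Γ.Y) (i : ℕ) :
    Γ.b i * {z | Γ.G.dist x z = i}.ncard = Γ.c (i+1) * {z | Γ.G.dist x z = i+1}.ncard := by
  apply double_count {z | Γ.G.dist x z = i} {z | Γ.G.dist x z = i+1} Γ.G.Adj
  · intro w hw
    rw [← Γ.hb i x hx w hw]
    congr 1
    ext z
    simp only [Set.mem_setOf_eq]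
    tauto
  · intro z hz
    rw [← Γ.hc (i+1) (by omega) x hx z hz]
    congr 1
    ext w
    simp only [Set.mem_setOf_eq]
    constructor
    · intro ⟨h1, h2⟩
      exact ⟨h2.symm, h1⟩
    · intro ⟨h1, h2⟩
      exact ⟨h2, h1.symm⟩

lemma n_rec {x y : V} (hx : x ∈ Γ.Y) (hyY : y ∈ Γ.Y) (hy : Γ.G.dist x y = 2)
    (i : ℕ) (hi : 1 ≤ i) :
    Γ.b (i+1) * {w | Γ.G.dist x w = i+1 ∧ Γ.G.dist y w = i-1}.ncard =
      Γ.c i * {z | Γ.G.dist x z = i+2 ∧ Γ.G.dist y z = i}.ncard := by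
  apply double_count _ _ Γ.G.Adj
  · intro w hw
    obtain ⟨hw1, hw2⟩ := hw
    rw [← Γ.hb (i+1) x hx w hw1]
    congr 1
    ext z
    simp only [Set.mem_setOf_eq]
    constructor
    · intro ⟨⟨h1, _⟩, h3⟩
      exact ⟨h3, h1⟩
    · intro ⟨hadj, hdz⟩
      have t1 : Γ.G.dist y z ≤ Γ.G.dist y w + Γ.G.dist w z := Γ.conn.dist_triangle
      have t2 : Γ.G.dist x z ≤ Γ.G.dist x y + Γ.G.dist y z := Γ.conn.dist_triangle
      have t3 : Γ.G.dist w z = 1 := dist_eq_one_iff_adj.mpr hadj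
      refine ⟨⟨hdz, by omega⟩, hadj⟩
  · intro z hz
    obtain ⟨hz1, hz2⟩ := hz
    rw [← Γ.hc i hi y hyY z hz2]
    congr 1
    ext w
    simp only [Set.mem_setOf_eq]
    constructor
    · intro ⟨⟨_, h2⟩, h3⟩
      exact ⟨h3.symm, h2⟩
    · intro ⟨hadj, hdw⟩
      have t1 : Γ.G.dist x w ≤ Γ.G.dist x y + Γ.G.dist y w := Γ.conn.dist_triangle
      have t2 : Γ.G.dist x z ≤ Γ.G.dist x w + Γ.G.dist w z := Γ.conn.dist_triangle
      have t3 : Γ.G.dist w z = 1 := dist_eq_one_iff_adj.mpr hadj.symm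
      refine ⟨⟨by omega, hdw⟩, hadj.symm⟩

lemma k_zero {x : V} : {z | Γ.G.dist x z = 0}.ncard = 1 := by
  have : {z | Γ.G.dist x z = 0} = {x} := by
    ext z
    simp only [Set.mem_setOf_eq, Set.mem_singleton_iff]
    constructor
    · intro h
      exact ((Γ.conn.dist_eq_zero_iff).mp h).symm
    · intro h
      subst h
      exact SimpleGraph.dist_self
  rw [this, Set.ncard_singleton]

lemma n_zero {x y : V} (hy : Γ.G.dist x y = 2) :
    {z | Γ.G.dist x z = 0+2 ∧ Γ.G.dist y z = 0}.ncard = 1 := by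
  have : {z | Γ.G.dist x z = 0+2 ∧ Γ.G.dist y z = 0} = {y} := by
    ext z
    simp only [Set.mem_setOf_eq, Set.mem_singleton_iff]
    constructor
    · intro ⟨_, h2⟩
      exact ((Γ.conn.dist_eq_zero_iff).mp h2).symm
    · intro h
      subst h
      exact ⟨hy, SimpleGraph.dist_self⟩
  rw [this, Set.ncard_singleton]

lemma k_prod {x : V} (hx : x ∈ Γ.Y) (i : ℕ) :
    (∏ j ∈ Finset.range i, Γ.c (j+1)) * {z | Γ.G.dist x z = i}.ncard =
      ∏ j ∈ Finset.range i, Γ.b j := by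
  induction i with
  | zero => rw [Finset.prod_range_zero, Finset.prod_range_zero, one_mul, k_zero Γ]
  | succ n ih =>
      rw [Finset.prod_range_succ, Finset.prod_range_succ]
      calc (∏ j ∈ Finset.range n, Γ.c (j+1)) * Γ.c (n+1) * {z | Γ.G.dist x z = n+1}.ncard
          = (∏ j ∈ Finset.range n, Γ.c (j+1)) * (Γ.c (n+1) * {z | Γ.G.dist x z = n+1}.ncard) := by ring
        _ = (∏ j ∈ Finset.range n, Γ.c (j+1)) * (Γ.b n * {z | Γ.G.dist x z = n}.ncard) := by
            rw [← k_rec Γ hx n]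
        _ = ((∏ j ∈ Finset.range n, Γ.c (j+1)) * {z | Γ.G.dist x z = n}.ncard) * Γ.b n := by ring
        _ = (∏ j ∈ Finset.range n, Γ.b j) * Γ.b n := by rw [ih]

lemma n_prod {x y : V} (hx : x ∈ Γ.Y) (hyY : y ∈ Γ.Y) (hy : Γ.G.dist x y = 2) (i : ℕ) :
    (∏ j ∈ Finset.range i, Γ.c (j+1)) * {z | Γ.G.dist x z = i+2 ∧ Γ.G.dist y z = i}.ncard =
      ∏ j ∈ Finset.range i, Γ.b (j+2) := by
  induction i with
  | zero => rw [Finset.prod_range_zero, Finset.prod_range_zero, one_mul, n_zero Γ hy]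
  | succ n ih =>
      rw [Finset.prod_range_succ, Finset.prod_range_succ]
      have hrec := n_rec Γ hx hyY hy (n+1) (by omega)
      rw [show n + 1 - 1 = n by omega, show n + 1 + 1 = n + 2 by omega,
        show n + 1 + 2 = n + 3 by omega] at hrec
      rw [show n + 1 + 2 = n + 3 by omega]
      calc (∏ j ∈ Finset.range n, Γ.c (j+1)) * Γ.c (n+1) * {z | Γ.G.dist x z = n+3 ∧ Γ.G.dist y z = n+1}.ncard
          = (∏ j ∈ Finset.range n, Γ.c (j+1)) * (Γ.c (n+1) * {z | Γ.G.dist x z = n+3 ∧ Γ.G.dist y z = n+1}.ncard) := by ring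
        _ = (∏ j ∈ Finset.range n, Γ.c (j+1)) * (Γ.b (n+2) * {z | Γ.G.dist x z = n+2 ∧ Γ.G.dist y z = n}.ncard) := by
            rw [hrec]
        _ = ((∏ j ∈ Finset.range n, Γ.c (j+1)) * {z | Γ.G.dist x z = n+2 ∧ Γ.G.dist y z = n}.ncard) * Γ.b (n+2) := by ring
        _ = (∏ j ∈ Finset.range n, Γ.b (j+2)) * Γ.b (n+2) := by rw [ih]



end DBRGaux

theorem stmt_11 {V : Type} [Fintype V] (Γ : DBRG V) (hD : 3 ≤ Γ.D) (hev : Even Γ.D)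
    (x : V) (hx : x ∈ Γ.Y) (y : V) (hy : Γ.G.dist x y = 2) :
    {z | Γ.G.dist x z = Γ.D ∧ Γ.G.dist y z = Γ.D}.ncard = 0 ↔ Γ.b (Γ.D - 1) = 1 := by
  classical
  have hyY : y ∈ Γ.Y := (DBRGaux.dist_parity Γ hx).mpr (by rw [hy]; exact even_two)
  obtain ⟨e, he⟩ : ∃ e, Γ.D = e + 2 := ⟨Γ.D - 2, by omega⟩
  have heve : Even e := by
    rw [he] at hev
    rcases hev with ⟨m, hm⟩
    exact ⟨m - 1, by omega⟩
  rw [he, show e + 2 - 1 = e + 1 by omega]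
  -- partition of Γ_{e+2}(x)
  have hsplit : {z | Γ.G.dist x z = e + 2} =
      {z | Γ.G.dist x z = e + 2 ∧ Γ.G.dist y z = e} ∪
      {z | Γ.G.dist x z = e + 2 ∧ Γ.G.dist y z = e + 2} := by
    ext z
    simp only [Set.mem_setOf_eq, Set.mem_union]
    constructor
    · intro h
      have h1 : Γ.G.dist y z ≤ Γ.D := (Γ.eccY y hyY).2 z
      rw [he] at h1
      have h2 : Γ.G.dist x z ≤ Γ.G.dist x y + Γ.G.dist y z := Γ.conn.dist_triangle
      have hzY : z ∈ Γ.Y := (DBRGaux.dist_parity Γ hx).mpr (by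
        rw [h]
        rcases heve with ⟨m, hm⟩
        exact ⟨m + 1, by omega⟩)
      have h3 : Even (Γ.G.dist y z) := (DBRGaux.dist_parity Γ hyY).mp hzY
      rw [Nat.even_iff] at h3
      have h4 := Nat.even_iff.mp heve
      have : Γ.G.dist y z = e ∨ Γ.G.dist y z = e + 2 := by omega
      tauto
    · intro h
      tauto
  have hdisj : Disjoint {z | Γ.G.dist x z = e + 2 ∧ Γ.G.dist y z = e}
      {z | Γ.G.dist x z = e + 2 ∧ Γ.G.dist y z = e + 2} := by
    rw [Set.disjoint_left]
    intro z h1 h2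
    have := h1.2
    have := h2.2
    omega
  have hpart : {z | Γ.G.dist x z = e + 2}.ncard =
      {z | Γ.G.dist x z = e + 2 ∧ Γ.G.dist y z = e}.ncard +
      {z | Γ.G.dist x z = e + 2 ∧ Γ.G.dist y z = e + 2}.ncard := by
    rw [hsplit]
    exact Set.ncard_union_eq hdisj (Set.toFinite _) (Set.toFinite _)
  -- product identities
  have hK := DBRGaux.k_prod Γ hx (e + 2)
  have hN := DBRGaux.n_prod Γ hx hyY hy e
  have hKexp : (∏ j ∈ Finset.range (e + 2), Γ.c (j + 1)) =
      (∏ j ∈ Finset.range e, Γ.c (j + 1)) * Γ.c (e + 1) * Γ.c (e + 2) := by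
    rw [Finset.prod_range_succ, Finset.prod_range_succ]
  have hBexp : (∏ j ∈ Finset.range (e + 2), Γ.b j) =
      (∏ j ∈ Finset.range e, Γ.b (j + 2)) * Γ.b 1 * Γ.b 0 := by
    rw [Finset.prod_range_succ', Finset.prod_range_succ']
  have hc2 : Γ.c (e + 2) = Γ.b 0 := by
    have := DBRGaux.cD_eq_b0 Γ hD hev hx
    rwa [he] at this
  rw [hKexp, hBexp, hc2] at hK
  -- abbreviations
  have hCpos : 0 < ∏ j ∈ Finset.range e, Γ.c (j + 1) :=
    Finset.prod_pos fun j hj => DBRGaux.c_pos Γ hx (by omega)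
      (by have := Finset.mem_range.mp hj; omega)
  have hPpos : 0 < ∏ j ∈ Finset.range e, Γ.b (j + 2) :=
    Finset.prod_pos fun j hj => DBRGaux.b_pos Γ hx
      (by have := Finset.mem_range.mp hj; omega)
  have hb0 : 0 < Γ.b 0 := DBRGaux.b_pos Γ hx (by omega)
  have hcE : 0 < Γ.c (e + 1) := DBRGaux.c_pos Γ hx (by omega) (by omega)
  have hbE : 0 < Γ.b (e + 1) := DBRGaux.b_pos Γ hx (by omega)
  have key : ({z | Γ.G.dist x z = e + 2}.ncard =
      {z | Γ.G.dist x z = e + 2 ∧ Γ.G.dist y z = e}.ncard) ↔ (Γ.b 1 = Γ.c (e + 1)) := by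
    constructor
    · intro h
      rw [h] at hK
      have e3 : ((∏ j ∈ Finset.range e, Γ.b (j + 2)) * Γ.b 0) * Γ.b 1 =
          ((∏ j ∈ Finset.range e, Γ.b (j + 2)) * Γ.b 0) * Γ.c (e + 1) := by
        calc ((∏ j ∈ Finset.range e, Γ.b (j + 2)) * Γ.b 0) * Γ.b 1
            = (∏ j ∈ Finset.range e, Γ.b (j + 2)) * Γ.b 1 * Γ.b 0 := by ring
          _ = (∏ j ∈ Finset.range e, Γ.c (j + 1)) * Γ.c (e + 1) * Γ.b 0 *
              {z | Γ.G.dist x z = e + 2 ∧ Γ.G.dist y z = e}.ncard := hK.symm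
          _ = Γ.c (e + 1) * Γ.b 0 * ((∏ j ∈ Finset.range e, Γ.c (j + 1)) *
              {z | Γ.G.dist x z = e + 2 ∧ Γ.G.dist y z = e}.ncard) := by ring
          _ = Γ.c (e + 1) * Γ.b 0 * (∏ j ∈ Finset.range e, Γ.b (j + 2)) := by rw [hN]
          _ = ((∏ j ∈ Finset.range e, Γ.b (j + 2)) * Γ.b 0) * Γ.c (e + 1) := by ring
      exact Nat.eq_of_mul_eq_mul_left (by positivity) e3
    · intro h
      have e4 : ((∏ j ∈ Finset.range e, Γ.c (j + 1)) * Γ.c (e + 1) * Γ.b 0) *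
          {z | Γ.G.dist x z = e + 2}.ncard =
          ((∏ j ∈ Finset.range e, Γ.c (j + 1)) * Γ.c (e + 1) * Γ.b 0) *
          {z | Γ.G.dist x z = e + 2 ∧ Γ.G.dist y z = e}.ncard := by
        calc ((∏ j ∈ Finset.range e, Γ.c (j + 1)) * Γ.c (e + 1) * Γ.b 0) *
            {z | Γ.G.dist x z = e + 2}.ncard
            = (∏ j ∈ Finset.range e, Γ.b (j + 2)) * Γ.b 1 * Γ.b 0 := hK
          _ = (∏ j ∈ Finset.range e, Γ.b (j + 2)) * Γ.c (e + 1) * Γ.b 0 := by rw [h]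
          _ = ((∏ j ∈ Finset.range e, Γ.c (j + 1)) *
              {z | Γ.G.dist x z = e + 2 ∧ Γ.G.dist y z = e}.ncard) * Γ.c (e + 1) * Γ.b 0 := by
              rw [hN]
          _ = ((∏ j ∈ Finset.range e, Γ.c (j + 1)) * Γ.c (e + 1) * Γ.b 0) *
              {z | Γ.G.dist x z = e + 2 ∧ Γ.G.dist y z = e}.ncard := by ring
      exact Nat.eq_of_mul_eq_mul_left (by positivity) e4
  have hkp := DBRGaux.kprime Γ hD hev hx
  have hcb := DBRGaux.cb_Dm1 Γ hD hev hx
  rw [show Γ.D - 1 = e + 1 by omega] at hcb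
  constructor
  · intro hp
    have hkn : {z | Γ.G.dist x z = e + 2}.ncard =
        {z | Γ.G.dist x z = e + 2 ∧ Γ.G.dist y z = e}.ncard := by omega
    have hb1 := key.mp hkn
    omega
  · intro hb
    have hb1 : Γ.b 1 = Γ.c (e + 1) := by omega
    have := key.mpr hb1
    omega
end

section
/- Let $\Gamma$ be a $2$-$Y$-homogeneous $(Y,Y')$-distance-biregular graph with $D \ge 3$ and $c'_2 \ge 2$. For even $i$ with $1 \le i \le \min\{D-1, D'-1\}$ and $\gamma_i \ne 0$, we have $\gamma_i(c_{i+1} - 1) = c_i(c'_2 - 1)$, where $\gamma_i = |\Gamma_{i-1}(u) \cap \Gamma_1(x) \cap \Gamma_1(y)|$ for $x \in Y$, $y \in \Gamma_2(x)$, $u \in \Gamma_i(x)\cap\Gamma_i(y)$. -/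
open SimpleGraph Set

section Aux

variable {V : Type} [Fintype V]

lemma aux_ncard_filter (p : V → Prop) [DecidablePred p] :
    {x | p x}.ncard = (Finset.univ.filter p).card := by
  rw [Set.ncard_eq_toFinset_card', Set.toFinset_setOf]

set_option linter.unusedSectionVars false in
lemma aux_adj_dist_le {G : SimpleGraph V} (hc : G.Connected) {u a b : V} (h : G.Adj a b) :
    G.dist u b ≤ G.dist u a + 1 := by
  have ht := hc.dist_triangle (u := u) (v := a) (w := b)
  rwa [SimpleGraph.dist_eq_one_iff_adj.mpr h] at ht

lemma aux_walk_parity (Γ : DBRG V) : ∀ {a b : V} (w : Γ.G.Walk a b),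
    (a ∈ Γ.Y ↔ b ∈ Γ.Y) ↔ Even w.length := by
  intro a b w
  induction w with
  | nil => simp
  | @cons a c b h p ih =>
    have h1 := Γ.bip a c h
    have h2 := Γ.disj c
    have h3 := Γ.cover c
    simp only [SimpleGraph.Walk.length_cons, Nat.even_add_one]
    tauto

lemma aux_parity (Γ : DBRG V) {u : V} (hu : u ∈ Γ.Y) (v : V) :
    v ∈ Γ.Y ↔ Even (Γ.G.dist u v) := by
  obtain ⟨w, hw⟩ := Γ.conn.exists_walk_length_eq_dist u v
  rw [← hw, ← aux_walk_parity Γ w]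
  tauto

lemma aux_closer (Γ : DBRG V) {u v : V} {n : ℕ} (h : Γ.G.dist u v = n + 1) :
    ∃ s, Γ.G.Adj v s ∧ Γ.G.dist u s = n := by
  obtain ⟨p, hp⟩ := Γ.conn.exists_walk_length_eq_dist v u
  rw [SimpleGraph.dist_comm, h] at hp
  cases p with
  | nil => simp at hp
  | @cons v s u hadj q =>
    refine ⟨s, hadj, ?_⟩
    simp only [SimpleGraph.Walk.length_cons] at hp
    have h1 : Γ.G.dist u s ≤ n := by
      rw [SimpleGraph.dist_comm]
      exact le_trans (SimpleGraph.dist_le q) (by omega)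
    have h2 : Γ.G.dist u v ≤ Γ.G.dist u s + 1 := aux_adj_dist_le Γ.conn hadj.symm
    omega

lemma aux_exists_dist (Γ : DBRG V) {u : V} :
    ∀ k, ∀ y, Γ.G.dist u y = k → ∀ n ≤ k, ∃ v, Γ.G.dist u v = n := by
  intro k
  induction k with
  | zero =>
    intro y hy n hn
    exact ⟨u, by simp [Nat.le_zero.mp hn]⟩
  | succ k ih =>
    intro y hy n hn
    rcases Nat.lt_or_ge n (k + 1) with h | h
    · obtain ⟨s, _, hs⟩ := aux_closer Γ hy
      exact ih s hs n (by omega)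
    · exact ⟨y, by rw [hy]; omega⟩

lemma aux_exists_farther (Γ : DBRG V) {u v : V} (hu : u ∈ Γ.Y) {n : ℕ}
    (hv : Γ.G.dist u v = n) (hn : n + 1 ≤ Γ.D) :
    ∃ w, Γ.G.Adj v w ∧ Γ.G.dist u w = n + 1 := by
  obtain ⟨⟨yD, hyD⟩, _⟩ := Γ.eccY u hu
  obtain ⟨t, ht⟩ := aux_exists_dist Γ Γ.D yD hyD (n + 1) hn
  obtain ⟨s, hs_adj, hs⟩ := aux_closer Γ ht
  have h1 := Γ.hb n u hu s hs
  have h2 := Γ.hb n u hu v hv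
  have hpos : 0 < Γ.b n := by
    rw [← h1]
    exact (Set.ncard_pos (Set.toFinite _)).mpr ⟨t, hs_adj.symm, ht⟩
  rw [← h2] at hpos
  obtain ⟨w, hw1, hw2⟩ := (Set.ncard_pos (Set.toFinite _)).mp hpos
  exact ⟨w, hw1, hw2⟩

end Aux

theorem stmt_12 {V : Type} [Fintype V] (Γ : DBRG V) (hD : 3 ≤ Γ.D)
    (γ : ℕ → ℕ) (hhom : Γ.TwoYHom γ) (hc2' : 2 ≤ Γ.c' 2)
    (i : ℕ) (hev : Even i) (hi1 : 1 ≤ i) (hi2 : i ≤ min (Γ.D - 1) (Γ.D' - 1))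
    (hγ : γ i ≠ 0) :
    (γ i : ℤ) * ((Γ.c (i + 1) : ℤ) - 1) = (Γ.c i : ℤ) * ((Γ.c' 2 : ℤ) - 1) := by
  classical
  obtain ⟨u, huY⟩ := Γ.Yne
  have hconn := Γ.conn
  have hiD : i ≤ Γ.D - 1 := le_trans hi2 (min_le_left _ _)
  have hiD1 : i + 1 ≤ Γ.D := by omega
  obtain ⟨⟨yD, hyD⟩, _⟩ := Γ.eccY u huY
  obtain ⟨v, hv⟩ := aux_exists_dist Γ Γ.D yD hyD i (by omega)
  obtain ⟨w, hvw, hw⟩ := aux_exists_farther Γ huY hv hiD1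
  have hvY : v ∈ Γ.Y := (aux_parity Γ huY v).mpr (by rw [hv]; exact hev)
  have hwnY : w ∉ Γ.Y := by
    intro hmem
    have h := (aux_parity Γ huY w).mp hmem
    rw [hw, Nat.even_add_one] at h
    exact h hev
  have hwY' : w ∈ Γ.Y' := (Γ.cover w).resolve_left hwnY
  have hoddim1 : ¬ Even (i - 1) := by
    intro he
    rcases he with ⟨a, ha⟩
    rcases hev with ⟨b, hb⟩
    omega
  set P : Finset V := Finset.univ.filter (fun p => Γ.G.Adj v p ∧ Γ.G.dist u p = i - 1) with hPdef
  set Q : Finset V := Finset.univ.filter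
    (fun q => Γ.G.Adj w q ∧ Γ.G.dist u q = i ∧ q ≠ v) with hQdef
  set S : Finset (V × V) := Finset.univ.filter
    (fun pq => pq.1 ∈ P ∧ pq.2 ∈ Q ∧ Γ.G.Adj pq.1 pq.2) with hSdef
  -- card of P
  have cardP : P.card = Γ.c i := by
    rw [hPdef, ← aux_ncard_filter]
    exact Γ.hc i hi1 u huY v hv
  -- card of Q
  have cardQbase : (Finset.univ.filter
      (fun q => Γ.G.Adj w q ∧ Γ.G.dist u q = i)).card = Γ.c (i + 1) := by
    rw [← aux_ncard_filter]
    have := Γ.hc (i + 1) (by omega) u huY w hw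
    simpa using this
  have hvmem : v ∈ Finset.univ.filter (fun q => Γ.G.Adj w q ∧ Γ.G.dist u q = i) := by
    simp [hvw.symm, hv]
  have hQerase : Q = (Finset.univ.filter
      (fun q => Γ.G.Adj w q ∧ Γ.G.dist u q = i)).erase v := by
    ext q
    simp only [hQdef, Finset.mem_filter, Finset.mem_univ, true_and, Finset.mem_erase]
    tauto
  have cardQ : Q.card = Γ.c (i + 1) - 1 := by
    rw [hQerase, Finset.card_erase_of_mem hvmem, cardQbase]
  have hc1pos : 1 ≤ Γ.c (i + 1) := by
    have h := Finset.card_pos.mpr ⟨v, hvmem⟩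
    omega
  -- fibers over q ∈ Q have size γ i
  have fibQ : ∀ q ∈ Q, (P.filter (fun p => Γ.G.Adj q p)).card = γ i := by
    intro q hq
    simp only [hQdef, Finset.mem_filter, Finset.mem_univ, true_and] at hq
    obtain ⟨hwq, hq_dist, hq_ne⟩ := hq
    have hqY : q ∈ Γ.Y := (aux_parity Γ huY q).mpr (by rw [hq_dist]; exact hev)
    have hvq : Γ.G.dist v q = 2 := by
      have hle : Γ.G.dist v q ≤ 2 := by
        have ht := hconn.dist_triangle (u := v) (v := w) (w := q)
        rw [SimpleGraph.dist_eq_one_iff_adj.mpr hvw, SimpleGraph.dist_eq_one_iff_adj.mpr hwq]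
          at ht
        exact ht
      have hne0 : Γ.G.dist v q ≠ 0 := by
        intro h
        exact hq_ne (hconn.dist_eq_zero_iff.mp h).symm
      have hne1 : Γ.G.dist v q ≠ 1 := by
        intro h
        have hadj := SimpleGraph.dist_eq_one_iff_adj.mp h
        exact Γ.disj q ⟨hqY, (Γ.bip v q hadj).mp hvY⟩
      omega
    have hcount := hhom i hi1 hiD v hvY q hvq u
      (by rw [SimpleGraph.dist_comm]; exact hv) (by rw [SimpleGraph.dist_comm]; exact hq_dist)
    rw [aux_ncard_filter] at hcount
    rw [← hcount]
    congr 1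
    ext p
    simp only [hPdef, Finset.mem_filter, Finset.mem_univ, true_and]
    tauto
  -- fibers over p ∈ P have size c'₂ - 1
  have fibP : ∀ p ∈ P, (Q.filter (fun q => Γ.G.Adj p q)).card = Γ.c' 2 - 1 := by
    intro p hp
    simp only [hPdef, Finset.mem_filter, Finset.mem_univ, true_and] at hp
    obtain ⟨hvp, hp_dist⟩ := hp
    have hpnY : p ∉ Γ.Y := by
      intro hm
      have h := (aux_parity Γ huY p).mp hm
      rw [hp_dist] at h
      exact hoddim1 h
    have hpY' : p ∈ Γ.Y' := (Γ.cover p).resolve_left hpnY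
    have hpw : Γ.G.dist p w = 2 := by
      have hle : Γ.G.dist p w ≤ 2 := by
        have ht := hconn.dist_triangle (u := p) (v := v) (w := w)
        rw [SimpleGraph.dist_eq_one_iff_adj.mpr hvp.symm,
          SimpleGraph.dist_eq_one_iff_adj.mpr hvw] at ht
        exact ht
      have hne0 : Γ.G.dist p w ≠ 0 := by
        intro h
        have heq := hconn.dist_eq_zero_iff.mp h
        rw [heq, hw] at hp_dist
        omega
      have hne1 : Γ.G.dist p w ≠ 1 := by
        intro h
        have hadj := SimpleGraph.dist_eq_one_iff_adj.mp h
        exact hpnY ((Γ.bip p w hadj).mpr hwY')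
      omega
    have hcount := Γ.hc' 2 (by norm_num) p hpY' w hpw
    simp only [show (2:ℕ) - 1 = 1 from rfl, SimpleGraph.dist_eq_one_iff_adj] at hcount
    have hbase : (Finset.univ.filter
        (fun q => Γ.G.Adj w q ∧ Γ.G.Adj p q)).card = Γ.c' 2 := by
      rw [← aux_ncard_filter]
      exact hcount
    have hvmem2 : v ∈ Finset.univ.filter (fun q => Γ.G.Adj w q ∧ Γ.G.Adj p q) := by
      simp only [Finset.mem_filter, Finset.mem_univ, true_and]
      exact ⟨hvw.symm, hvp.symm⟩
    have hfe : Q.filter (fun q => Γ.G.Adj p q) = (Finset.univ.filter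
        (fun q => Γ.G.Adj w q ∧ Γ.G.Adj p q)).erase v := by
      ext q
      simp only [hQdef, Finset.mem_filter, Finset.mem_univ, true_and, Finset.mem_erase]
      constructor
      · rintro ⟨⟨hwq, _, hne⟩, hpq⟩
        exact ⟨hne, hwq, hpq⟩
      · rintro ⟨hne, hwq, hpq⟩
        refine ⟨⟨hwq, ?_, hne⟩, hpq⟩
        have h1 : Γ.G.dist u q ≤ Γ.G.dist u p + 1 := aux_adj_dist_le hconn hpq
        have h2 : Γ.G.dist u w ≤ Γ.G.dist u q + 1 := aux_adj_dist_le hconn hwq.symm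
        rw [hp_dist] at h1
        rw [hw] at h2
        omega
    rw [hfe, Finset.card_erase_of_mem hvmem2, hbase]
  -- double count
  have hSmemQ : ∀ pq ∈ S, Prod.snd pq ∈ Q := by
    intro pq hpq
    simp only [hSdef, Finset.mem_filter, Finset.mem_univ, true_and] at hpq
    exact hpq.2.1
  have hSmemP : ∀ pq ∈ S, Prod.fst pq ∈ P := by
    intro pq hpq
    simp only [hSdef, Finset.mem_filter, Finset.mem_univ, true_and] at hpq
    exact hpq.1
  have hS1 : S.card = Q.card * γ i := by
    rw [Finset.card_eq_sum_card_fiberwise hSmemQ]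
    rw [Finset.sum_congr rfl (fun q hq => ?_), Finset.sum_const, smul_eq_mul]
    rw [← fibQ q hq]
    apply Finset.card_bij (fun pq _ => pq.1)
    · intro pq hpq
      simp only [Finset.mem_filter, hSdef, Finset.mem_univ, true_and] at hpq ⊢
      obtain ⟨⟨hP1, _, hadj⟩, hsnd⟩ := hpq
      exact ⟨hP1, by rw [← hsnd]; exact hadj.symm⟩
    · intro a ha b hb hab
      simp only [Finset.mem_filter] at ha hb
      exact Prod.ext hab (ha.2.trans hb.2.symm)
    · intro p hp
      simp only [Finset.mem_filter] at hp
      refine ⟨(p, q), ?_, rfl⟩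
      simp only [Finset.mem_filter, hSdef, Finset.mem_univ, true_and]
      exact ⟨⟨hp.1, hq, hp.2.symm⟩, by trivial⟩
  have hS2 : S.card = P.card * (Γ.c' 2 - 1) := by
    rw [Finset.card_eq_sum_card_fiberwise hSmemP]
    rw [Finset.sum_congr rfl (fun p hp => ?_), Finset.sum_const, smul_eq_mul]
    rw [← fibP p hp]
    apply Finset.card_bij (fun pq _ => pq.2)
    · intro pq hpq
      simp only [Finset.mem_filter, hSdef, Finset.mem_univ, true_and] at hpq ⊢
      obtain ⟨⟨_, hQ1, hadj⟩, hfst⟩ := hpq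
      exact ⟨hQ1, by rw [← hfst]; exact hadj⟩
    · intro a ha b hb hab
      simp only [Finset.mem_filter] at ha hb
      exact Prod.ext (ha.2.trans hb.2.symm) hab
    · intro q hq
      simp only [Finset.mem_filter] at hq
      refine ⟨(p, q), ?_, rfl⟩
      simp only [Finset.mem_filter, hSdef, Finset.mem_univ, true_and]
      exact ⟨⟨hp, hq.1, hq.2⟩, by trivial⟩
  have key : (Γ.c (i + 1) - 1) * γ i = Γ.c i * (Γ.c' 2 - 1) := by
    rw [← cardQ, ← cardP, ← hS1, ← hS2]
  have h2 : 1 ≤ Γ.c' 2 := by omega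
  zify [hc1pos, h2] at key
  linear_combination key
end

section
/- Let $\Gamma$ be a $2$-$Y$-homogeneous $(Y,Y')$-distance-biregular graph with $D \ge 3$, $c'_2 \ge 2$, and $\gamma_2 \ne 0$. Then $(k'-2)(\gamma_2 - 1) = (c_2 - 1)(c'_2 - 2)$, where $k'$ is the valency of vertices in $Y'$, $c_2, c'_2$ are intersection numbers of the two color classes, and $\gamma_2 = |\Gamma_1(z)\cap\Gamma_1(x)\cap\Gamma_1(y)|$ for $x \in Y$, $y \in \Gamma_2(x)$, $z \in \Gamma_2(x)\cap\Gamma_2(y)$. -/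
open SimpleGraph Set

private lemma down_step {V : Type} {G : SimpleGraph V} {u z : V} {n : ℕ}
    (h : G.dist u z = n + 1) : ∃ y, G.Adj y z ∧ G.dist u y = n := by
  obtain ⟨p, hp⟩ := SimpleGraph.exists_walk_of_dist_ne_zero (by omega : G.dist u z ≠ 0)
  have hpr : p.reverse.length = n + 1 := by rw [SimpleGraph.Walk.length_reverse, hp, h]
  obtain ⟨y, hadj, q, hq⟩ : ∃ y, ∃ _ : G.Adj z y, ∃ q : G.Walk y u, q.length = n := by
    cases hq : p.reverse with
    | nil => rw [hq] at hpr; simp at hpr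
    | cons hadj q =>
      refine ⟨_, hadj, q, ?_⟩
      rw [hq] at hpr; simpa using hpr
  refine ⟨y, hadj.symm, ?_⟩
  have h1 : G.dist u y ≤ n := by
    have := SimpleGraph.dist_le q.reverse
    simpa [hq] using this
  have h2 : G.dist u z ≤ G.dist u y + 1 := by
    obtain ⟨r, hr⟩ := SimpleGraph.Reachable.exists_walk_length_eq_dist q.reverse.reachable
    have := SimpleGraph.dist_le (r.concat hadj.symm)
    rw [SimpleGraph.Walk.length_concat, hr] at this
    exact this
  omega

private lemma exists_at {V : Type} {G : SimpleGraph V} {u : V} :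
    ∀ m, ∀ z : V, G.dist u z = m → ∀ k ≤ m, ∃ y, G.dist u y = k := by
  intro m
  induction m with
  | zero => intro z hz k hk; exact ⟨z, by omega⟩
  | succ n ih =>
    intro z hz k hk
    rcases Nat.lt_or_ge k (n + 1) with h' | h'
    · obtain ⟨y, _, hy⟩ := down_step hz
      exact ih y hy k (by omega)
    · exact ⟨z, by omega⟩

private lemma ncard_setOf {V : Type} [Fintype V] (P : V → Prop) [DecidablePred P] :
    {x | P x}.ncard = (Finset.univ.filter P).card := by
  rw [← Set.ncard_coe_finset]
  congr 1
  ext x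
  simp

theorem stmt_13 {V : Type} [Fintype V] (Γ : DBRG V) (hD : 3 ≤ Γ.D)
    (γ : ℕ → ℕ) (hhom : Γ.TwoYHom γ) (hc2' : 2 ≤ Γ.c' 2) (hγ : γ 2 ≠ 0) :
    ((Γ.b' 0 : ℤ) - 2) * ((γ 2 : ℤ) - 1) = ((Γ.c 2 : ℤ) - 1) * ((Γ.c' 2 : ℤ) - 2) := by
  classical
  set G := Γ.G with hG
  obtain ⟨u, hu⟩ := Γ.Yne
  -- find w at distance 2 and v adjacent to u and w
  obtain ⟨zD, hzD⟩ := (Γ.eccY u hu).1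
  obtain ⟨w, hw2⟩ := exists_at Γ.D zD hzD 2 (by omega)
  obtain ⟨v, hvw, hv1⟩ := down_step (by rw [hw2] : G.dist u w = 1 + 1)
  have huv : G.Adj u v := SimpleGraph.dist_eq_one_iff_adj.mp hv1
  -- color classes
  have hvY' : v ∈ Γ.Y' := (Γ.bip u v huv).mp hu
  have hvnY : v ∉ Γ.Y := fun h => Γ.disj v ⟨h, hvY'⟩
  have hwY : w ∈ Γ.Y := by
    have := Γ.bip v w hvw
    rcases Γ.cover w with h | h
    · exact h
    · exact absurd (this.mpr h) hvnY
  have hwnY' : w ∉ Γ.Y' := fun h => Γ.disj w ⟨hwY, h⟩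
  have hunY' : u ∉ Γ.Y' := fun h => Γ.disj u ⟨hu, h⟩
  have huw : u ≠ w := by intro h; subst h; rw [SimpleGraph.dist_self] at hw2; omega
  have huvne : u ≠ v := fun h => hunY' (h ▸ hvY')
  have hwvne : w ≠ v := fun h => hwnY' (h ▸ hvY')
  -- generic distance facts
  have distYq : ∀ q, G.Adj v q → q ≠ u → G.dist u q = 2 := by
    intro q hvq hqu
    have hqY : q ∈ Γ.Y := by
      rcases Γ.cover q with h | h
      · exact h
      · exact absurd ((Γ.bip v q hvq).mpr h) hvnY
    have hle : G.dist u q ≤ 2 := by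
      calc G.dist u q ≤ G.dist u v + G.dist v q := Γ.conn.dist_triangle
        _ ≤ 1 + 1 := by
            rw [hv1]; exact add_le_add_right (le_of_eq (SimpleGraph.dist_eq_one_iff_adj.mpr hvq)) 1
    have hne0 : G.dist u q ≠ 0 := by
      rw [ne_eq, SimpleGraph.dist_eq_zero_iff_eq_or_not_reachable]
      push_neg
      exact ⟨fun h => hqu h.symm, (huv.reachable.trans hvq.reachable)⟩
    have hne1 : G.dist u q ≠ 1 := by
      intro h
      have : G.Adj u q := SimpleGraph.dist_eq_one_iff_adj.mp h
      exact Γ.disj q ⟨hqY, (Γ.bip u q this).mp hu⟩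
    omega
  have distWq : ∀ q, G.Adj v q → q ≠ w → G.dist w q = 2 := by
    intro q hvq hqw
    have hqY : q ∈ Γ.Y := by
      rcases Γ.cover q with h | h
      · exact h
      · exact absurd ((Γ.bip v q hvq).mpr h) hvnY
    have hle : G.dist w q ≤ 2 := by
      calc G.dist w q ≤ G.dist w v + G.dist v q := Γ.conn.dist_triangle
        _ ≤ 1 + 1 := by
            have h1 : G.dist w v = 1 := SimpleGraph.dist_eq_one_iff_adj.mpr hvw.symm
            rw [h1]
            exact add_le_add_right (le_of_eq (SimpleGraph.dist_eq_one_iff_adj.mpr hvq)) 1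
    have hne0 : G.dist w q ≠ 0 := by
      rw [ne_eq, SimpleGraph.dist_eq_zero_iff_eq_or_not_reachable]
      push_neg
      exact ⟨fun h => hqw h.symm, (hvw.symm.reachable.trans hvq.reachable)⟩
    have hne1 : G.dist w q ≠ 1 := by
      intro h
      have : G.Adj w q := SimpleGraph.dist_eq_one_iff_adj.mp h
      exact Γ.disj q ⟨hqY, (Γ.bip w q this).mp hwY⟩
    omega
  have distPv : ∀ p, G.Adj u p → p ≠ v → G.dist p v = 2 := by
    intro p hup hpv
    have hpY' : p ∈ Γ.Y' := (Γ.bip u p hup).mp hu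
    have hle : G.dist p v ≤ 2 := by
      calc G.dist p v ≤ G.dist p u + G.dist u v := Γ.conn.dist_triangle
        _ ≤ 1 + 1 := by
            have h1 : G.dist p u = 1 := SimpleGraph.dist_eq_one_iff_adj.mpr hup.symm
            rw [h1, hv1]
    have hne0 : G.dist p v ≠ 0 := by
      rw [ne_eq, SimpleGraph.dist_eq_zero_iff_eq_or_not_reachable]
      push_neg
      exact ⟨hpv, (hup.symm.reachable.trans huv.reachable)⟩
    have hne1 : G.dist p v ≠ 1 := by
      intro h
      have : G.Adj p v := SimpleGraph.dist_eq_one_iff_adj.mp h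
      exact Γ.disj p ⟨(Γ.bip p v this).mpr hvY', hpY'⟩
    omega
  -- the four counting sets
  set Sq : Finset V := Finset.univ.filter (fun q => G.Adj v q ∧ q ≠ u ∧ q ≠ w) with hSq
  set Sp : Finset V := Finset.univ.filter (fun p => G.Adj u p ∧ G.Adj w p ∧ p ≠ v) with hSp
  -- |Sq| = b' 0 - 2
  have cardSq : Sq.card = Γ.b' 0 - 2 := by
    have hval := Γ.hb' 0 v hvY' v (by simp)
    rw [ncard_setOf] at hval
    have hNv : (Finset.univ.filter (fun q => G.Adj v q ∧ G.dist v q = 0 + 1)).card = Γ.b' 0 :=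
      hval
    have hset : Sq = ((Finset.univ.filter (fun q => G.Adj v q ∧ G.dist v q = 0 + 1)).erase u).erase w := by
      ext q
      simp only [hSq, Finset.mem_filter, Finset.mem_erase, Finset.mem_univ, true_and]
      constructor
      · rintro ⟨h1, h2, h3⟩
        exact ⟨h3, h2, h1, SimpleGraph.dist_eq_one_iff_adj.mpr h1⟩
      · rintro ⟨h3, h2, h1, _⟩
        exact ⟨h1, h2, h3⟩
    have hwmem : w ∈ (Finset.univ.filter (fun q => G.Adj v q ∧ G.dist v q = 0 + 1)).erase u :=
      Finset.mem_erase.mpr ⟨huw.symm, Finset.mem_filter.mpr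
        ⟨Finset.mem_univ w, hvw, SimpleGraph.dist_eq_one_iff_adj.mpr hvw⟩⟩
    have humem : u ∈ Finset.univ.filter (fun q => G.Adj v q ∧ G.dist v q = 0 + 1) :=
      Finset.mem_filter.mpr ⟨Finset.mem_univ u, huv.symm, SimpleGraph.dist_eq_one_iff_adj.mpr huv.symm⟩
    rw [hset, Finset.card_erase_of_mem hwmem, Finset.card_erase_of_mem humem, hNv]
    omega
  have hb'2 : 2 ≤ Γ.b' 0 := by
    have hval := Γ.hb' 0 v hvY' v (by simp)
    rw [ncard_setOf] at hval
    rw [← hval]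
    have : ({u, w} : Finset V) ⊆ Finset.univ.filter (fun q => G.Adj v q ∧ G.dist v q = 0 + 1) := by
      intro x hx
      simp only [Finset.mem_insert, Finset.mem_singleton] at hx
      simp only [Finset.mem_filter, Finset.mem_univ, true_and]
      rcases hx with rfl | rfl
      · exact ⟨huv.symm, SimpleGraph.dist_eq_one_iff_adj.mpr huv.symm⟩
      · exact ⟨hvw, SimpleGraph.dist_eq_one_iff_adj.mpr hvw⟩
    calc 2 = ({u, w} : Finset V).card := by rw [Finset.card_insert_of_notMem (by simpa using huw), Finset.card_singleton]
      _ ≤ _ := Finset.card_le_card this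
  -- |Sp| = c 2 - 1
  have cardSp : Sp.card = Γ.c 2 - 1 := by
    have hval := Γ.hc 2 (by omega) u hu w hw2
    rw [ncard_setOf] at hval
    have hset : Sp = (Finset.univ.filter (fun p => G.Adj w p ∧ G.dist u p = 2 - 1)).erase v := by
      ext p
      simp only [hSp, Finset.mem_filter, Finset.mem_erase, Finset.mem_univ, true_and]
      constructor
      · rintro ⟨h1, h2, h3⟩
        exact ⟨h3, h2, SimpleGraph.dist_eq_one_iff_adj.mpr h1⟩
      · rintro ⟨h3, h2, h1⟩
        exact ⟨SimpleGraph.dist_eq_one_iff_adj.mp h1, h2, h3⟩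
    rw [hset, Finset.card_erase_of_mem, hval]
    simp only [Finset.mem_filter, Finset.mem_univ, true_and]
    exact ⟨hvw.symm, SimpleGraph.dist_eq_one_iff_adj.mpr huv⟩
  have hc2ge : 1 ≤ Γ.c 2 := by
    have hval := Γ.hc 2 (by omega) u hu w hw2
    rw [ncard_setOf] at hval
    rw [← hval]
    refine Finset.card_pos.mpr ⟨v, ?_⟩
    simp only [Finset.mem_filter, Finset.mem_univ, true_and]
    exact ⟨hvw.symm, SimpleGraph.dist_eq_one_iff_adj.mpr huv⟩
  -- inner count for q ∈ Sq
  have innerQ : ∀ q ∈ Sq,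
      (Finset.univ.filter (fun p => G.Adj u p ∧ G.Adj w p ∧ p ≠ v ∧ G.Adj p q)).card
        = γ 2 - 1 ∧ 1 ≤ γ 2 := by
    intro q hq
    simp only [hSq, Finset.mem_filter, Finset.mem_univ, true_and] at hq
    obtain ⟨hvq, hqu, hqw⟩ := hq
    have hd1 : G.dist u q = 2 := distYq q hvq hqu
    have hd2 : G.dist w q = 2 := distWq q hvq hqw
    have hval := hhom 2 (by omega) (by omega) u hu w hw2 q hd1 hd2
    rw [ncard_setOf] at hval
    have hvmem : v ∈ Finset.univ.filter
        (fun x => G.dist q x = 2 - 1 ∧ G.Adj u x ∧ G.Adj w x) := by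
      simp only [Finset.mem_filter, Finset.mem_univ, true_and]
      exact ⟨SimpleGraph.dist_eq_one_iff_adj.mpr hvq.symm, huv, hvw.symm⟩
    constructor
    · have hset : Finset.univ.filter (fun p => G.Adj u p ∧ G.Adj w p ∧ p ≠ v ∧ G.Adj p q)
          = (Finset.univ.filter (fun x => G.dist q x = 2 - 1 ∧ G.Adj u x ∧ G.Adj w x)).erase v := by
        ext p
        simp only [Finset.mem_filter, Finset.mem_erase, Finset.mem_univ, true_and]
        constructor
        · rintro ⟨h1, h2, h3, h4⟩
          exact ⟨h3, SimpleGraph.dist_eq_one_iff_adj.mpr h4.symm, h1, h2⟩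
        · rintro ⟨h3, h4, h1, h2⟩
          exact ⟨h1, h2, h3, (SimpleGraph.dist_eq_one_iff_adj.mp h4).symm⟩
      rw [hset, Finset.card_erase_of_mem hvmem, hval]
    · rw [← hval]
      exact Finset.card_pos.mpr ⟨v, hvmem⟩
  -- inner count for p ∈ Sp
  have innerP : ∀ p ∈ Sp,
      (Finset.univ.filter (fun q => G.Adj v q ∧ q ≠ u ∧ q ≠ w ∧ G.Adj p q)).card
        = Γ.c' 2 - 2 := by
    intro p hp
    simp only [hSp, Finset.mem_filter, Finset.mem_univ, true_and] at hp
    obtain ⟨hup, hwp, hpv⟩ := hp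
    have hpY' : p ∈ Γ.Y' := (Γ.bip u p hup).mp hu
    have hdpv : G.dist p v = 2 := distPv p hup hpv
    have hval := Γ.hc' 2 (by omega) p hpY' v hdpv
    rw [ncard_setOf] at hval
    have hset : Finset.univ.filter (fun q => G.Adj v q ∧ q ≠ u ∧ q ≠ w ∧ G.Adj p q)
        = ((Finset.univ.filter (fun q => G.Adj v q ∧ G.dist p q = 2 - 1)).erase u).erase w := by
      ext q
      simp only [Finset.mem_filter, Finset.mem_erase, Finset.mem_univ, true_and]
      constructor
      · rintro ⟨h1, h2, h3, h4⟩
        exact ⟨h3, h2, h1, SimpleGraph.dist_eq_one_iff_adj.mpr h4⟩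
      · rintro ⟨h3, h2, h1, h4⟩
        exact ⟨h1, h2, h3, SimpleGraph.dist_eq_one_iff_adj.mp h4⟩
    have hwmem : w ∈ (Finset.univ.filter (fun q => G.Adj v q ∧ G.dist p q = 2 - 1)).erase u :=
      Finset.mem_erase.mpr ⟨huw.symm, Finset.mem_filter.mpr
        ⟨Finset.mem_univ w, hvw, SimpleGraph.dist_eq_one_iff_adj.mpr hwp.symm⟩⟩
    have humem : u ∈ Finset.univ.filter (fun q => G.Adj v q ∧ G.dist p q = 2 - 1) :=
      Finset.mem_filter.mpr ⟨Finset.mem_univ u, huv.symm, SimpleGraph.dist_eq_one_iff_adj.mpr hup.symm⟩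
    rw [hset, Finset.card_erase_of_mem hwmem, Finset.card_erase_of_mem humem, hval]
    omega
  have hγ1 : 1 ≤ γ 2 := by omega
  -- the pair set
  set P : Finset (V × V) := Finset.univ.filter
    (fun pq => (G.Adj u pq.1 ∧ G.Adj w pq.1 ∧ pq.1 ≠ v) ∧
      (G.Adj v pq.2 ∧ pq.2 ≠ u ∧ pq.2 ≠ w) ∧ G.Adj pq.1 pq.2) with hP
  -- count via q
  have countQ : P.card = Sq.card * (γ 2 - 1) := by
    have hmap : ∀ pq ∈ P, pq.2 ∈ Sq := by
      intro pq hpq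
      simp only [hP, Finset.mem_filter, Finset.mem_univ, true_and] at hpq
      simp only [hSq, Finset.mem_filter, Finset.mem_univ, true_and]
      exact hpq.2.1
    rw [Finset.card_eq_sum_card_fiberwise hmap]
    rw [Finset.sum_congr rfl (fun q hq => ?_), Finset.sum_const, smul_eq_mul]
    have hq' := hq
    simp only [hSq, Finset.mem_filter, Finset.mem_univ, true_and] at hq'
    obtain ⟨hvq, hqu, hqw⟩ := hq'
    rw [← (innerQ q hq).1]
    have himg : P.filter (fun pq => pq.2 = q)
        = (Finset.univ.filter (fun p => G.Adj u p ∧ G.Adj w p ∧ p ≠ v ∧ G.Adj p q)).image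
            (fun p => (p, q)) := by
      ext pq
      simp only [hP, Finset.mem_filter, Finset.mem_univ, true_and, Finset.mem_image]
      constructor
      · rintro ⟨⟨⟨h1, h2, h3⟩, _, h4⟩, h5⟩
        exact ⟨pq.1, ⟨h1, h2, h3, h5 ▸ h4⟩, Prod.ext rfl h5.symm⟩
      · rintro ⟨p, ⟨h1, h2, h3, h4⟩, rfl⟩
        exact ⟨⟨⟨h1, h2, h3⟩, ⟨hvq, hqu, hqw⟩, h4⟩, rfl⟩
    rw [himg, Finset.card_image_of_injective _ (fun a b hab => congrArg Prod.fst hab)]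
  -- count via p
  have countP : P.card = Sp.card * (Γ.c' 2 - 2) := by
    have hmap : ∀ pq ∈ P, pq.1 ∈ Sp := by
      intro pq hpq
      simp only [hP, Finset.mem_filter, Finset.mem_univ, true_and] at hpq
      simp only [hSp, Finset.mem_filter, Finset.mem_univ, true_and]
      exact hpq.1
    rw [Finset.card_eq_sum_card_fiberwise hmap]
    rw [Finset.sum_congr rfl (fun p hp => ?_), Finset.sum_const, smul_eq_mul]
    have hp' := hp
    simp only [hSp, Finset.mem_filter, Finset.mem_univ, true_and] at hp'
    obtain ⟨hup, hwp, hpv⟩ := hp'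
    rw [← innerP p hp]
    have himg : P.filter (fun pq => pq.1 = p)
        = (Finset.univ.filter (fun q => G.Adj v q ∧ q ≠ u ∧ q ≠ w ∧ G.Adj p q)).image
            (fun q => (p, q)) := by
      ext pq
      simp only [hP, Finset.mem_filter, Finset.mem_univ, true_and, Finset.mem_image]
      constructor
      · rintro ⟨⟨_, ⟨h1, h2, h3⟩, h4⟩, h5⟩
        exact ⟨pq.2, ⟨h1, h2, h3, h5 ▸ h4⟩, Prod.ext h5.symm rfl⟩
      · rintro ⟨q, ⟨h1, h2, h3, h4⟩, rfl⟩
        exact ⟨⟨⟨hup, hwp, hpv⟩, ⟨h1, h2, h3⟩, h4⟩, rfl⟩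
    rw [himg, Finset.card_image_of_injective _ (fun a b hab => congrArg Prod.snd hab)]
  have key : (Γ.b' 0 - 2) * (γ 2 - 1) = (Γ.c 2 - 1) * (Γ.c' 2 - 2) := by
    rw [← cardSq, ← cardSp, ← countQ, ← countP]
  zify [hb'2, hγ1, hc2ge, hc2'] at key
  linarith [key]
end

section
/- Let $\Gamma$ be a $2$-$Y$-homogeneous $(Y,Y')$-distance-biregular graph with $D \ge 3$. If $c'_2 \ge 3$ then $D \le 5$. -/
open SimpleGraph Set

open SimpleGraph Set Finset

attribute [local instance] Classical.propDecidable

variable {V : Type} [Fintype V]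

namespace DBRG
variable (Γ : DBRG V)

lemma reach (u v : V) : Γ.G.Reachable u v := Γ.conn u v

lemma notY {v : V} (h : v ∈ Γ.Y') : v ∉ Γ.Y := fun h' => Γ.disj v ⟨h', h⟩
lemma notY' {v : V} (h : v ∈ Γ.Y) : v ∉ Γ.Y' := fun h' => Γ.disj v ⟨h, h'⟩

lemma adj_side {u v : V} (h : Γ.G.Adj u v) (hu : u ∈ Γ.Y) : v ∈ Γ.Y' :=
  (Γ.bip u v h).mp hu

lemma adj_side' {u v : V} (h : Γ.G.Adj u v) (hu : u ∈ Γ.Y') : v ∈ Γ.Y := by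
  rcases Γ.cover v with h1 | h1
  · exact h1
  · exact absurd ((Γ.bip u v h).mpr h1) (Γ.notY hu)

lemma tri_free {a b c : V} (hab : Γ.G.Adj a b) (hbc : Γ.G.Adj b c)
    (hac : Γ.G.Adj a c) : False := by
  rcases Γ.cover a with ha | ha
  · exact Γ.disj c ⟨Γ.adj_side' hbc (Γ.adj_side hab ha), Γ.adj_side hac ha⟩
  · exact Γ.disj c ⟨Γ.adj_side' hac ha, Γ.adj_side hbc (Γ.adj_side' hab ha)⟩

lemma no_adj_Y {u v : V} (hu : u ∈ Γ.Y) (hv : v ∈ Γ.Y) : ¬ Γ.G.Adj u v :=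
  fun h => Γ.disj v ⟨hv, Γ.adj_side h hu⟩

lemma no_adj_Y' {u v : V} (hu : u ∈ Γ.Y') (hv : v ∈ Γ.Y') : ¬ Γ.G.Adj u v :=
  fun h => Γ.disj v ⟨Γ.adj_side' h hu, hv⟩

lemma adj_dist_le {u v : V} (h : Γ.G.Adj u v) : Γ.G.dist u v ≤ 1 :=
  le_of_eq (SimpleGraph.dist_eq_one_iff_adj.mpr h)

lemma dist_eq_two {u v w : V} (huv : u ≠ v) (hn : ¬ Γ.G.Adj u v)
    (h1 : Γ.G.Adj u w) (h2 : Γ.G.Adj w v) : Γ.G.dist u v = 2 := by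
  have hle : Γ.G.dist u v ≤ 2 := by
    calc Γ.G.dist u v ≤ Γ.G.dist u w + Γ.G.dist w v := Γ.conn.dist_triangle
    _ ≤ 1 + 1 := Nat.add_le_add (Γ.adj_dist_le h1) (Γ.adj_dist_le h2)
  have h0 : Γ.G.dist u v ≠ 0 := fun h => huv ((Γ.conn.dist_eq_zero_iff).mp h)
  have h1' : Γ.G.dist u v ≠ 1 := fun h => hn (SimpleGraph.dist_eq_one_iff_adj.mp h)
  omega

lemma dist_getVert_le {u v : V} (p : Γ.G.Walk u v) (k : ℕ) :
    Γ.G.dist u (p.getVert k) ≤ k ∧ Γ.G.dist (p.getVert k) v ≤ p.length - k := by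
  induction p generalizing k with
  | nil =>
    exact ⟨Nat.le_trans (Nat.le_of_eq SimpleGraph.dist_self) (Nat.zero_le k),
      Nat.le_trans (Nat.le_of_eq SimpleGraph.dist_self) (Nat.zero_le _)⟩
  | @cons a a' v h q ih =>
    cases k with
    | zero =>
      simp only [Walk.getVert_zero]
      exact ⟨by simp, by simpa using SimpleGraph.dist_le (Walk.cons h q)⟩
    | succ m =>
      rw [Walk.getVert_cons_succ]
      obtain ⟨ih1, ih2⟩ := ih m
      constructor
      · calc Γ.G.dist a (q.getVert m) ≤ Γ.G.dist a a' + Γ.G.dist a' (q.getVert m) :=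
            Γ.conn.dist_triangle
        _ ≤ 1 + m := Nat.add_le_add (Γ.adj_dist_le h) ih1
        _ = m + 1 := by omega
      · simpa [Walk.length_cons, Nat.succ_sub_succ] using ih2

lemma exists_mid {u v : V} {k : ℕ} (hk : k ≤ Γ.G.dist u v) :
    ∃ z, Γ.G.dist u z = k ∧ Γ.G.dist z v = Γ.G.dist u v - k := by
  obtain ⟨p, hp⟩ := (Γ.reach u v).exists_walk_length_eq_dist
  obtain ⟨h1, h2⟩ := Γ.dist_getVert_le p k
  rw [hp] at h2
  have htri : Γ.G.dist u v ≤ Γ.G.dist u (p.getVert k) + Γ.G.dist (p.getVert k) v :=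
    Γ.conn.dist_triangle
  exact ⟨p.getVert k, by omega, by omega⟩

lemma side_of_dist {x : V} (hx : x ∈ Γ.Y) :
    ∀ n, ∀ z, Γ.G.dist x z = n → (Even n → z ∈ Γ.Y) ∧ (¬ Even n → z ∈ Γ.Y') := by
  intro n
  induction n with
  | zero =>
    intro z hz
    have : x = z := (Γ.conn.dist_eq_zero_iff).mp hz
    subst this
    exact ⟨fun _ => hx, fun h => absurd Even.zero h⟩
  | succ m ih =>
    intro z hz
    obtain ⟨w, hw1, hw2⟩ := Γ.exists_mid (u := x) (v := z) (k := m) (by omega)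
    rw [hz] at hw2
    have hadj : Γ.G.Adj w z := SimpleGraph.dist_eq_one_iff_adj.mp (by omega)
    obtain ⟨ihe, iho⟩ := ih w hw1
    constructor
    · intro he
      have hm : ¬ Even m := by simpa [Nat.even_add_one] using he
      exact Γ.adj_side' hadj (iho hm)
    · intro ho
      have hm : Even m := by
        by_contra hm
        exact ho (by simpa [Nat.even_add_one] using hm)
      exact Γ.adj_side hadj (ihe hm)

lemma ncard_filter (p : V → Prop) :
    {w | p w}.ncard = (Finset.univ.filter p).card := by
  rw [Set.ncard_eq_toFinset_card', Set.toFinset_setOf]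

lemma double_count (A : Finset V) (R : V → V → Prop) :
    ∑ w ∈ A, (Finset.univ.filter (R w)).card
      = ∑ y ∈ (Finset.univ : Finset V), (A.filter (fun w => R w y)).card := by
  simp only [Finset.card_filter]
  exact Finset.sum_comm

end DBRG
namespace DBRG
variable (Γ : DBRG V)

lemma commY {a b : V} (ha : a ∈ Γ.Y) (hab : Γ.G.dist a b = 2) :
    (Finset.univ.filter (fun w => Γ.G.Adj a w ∧ Γ.G.Adj b w)).card = Γ.c 2 := by
  have h := Γ.hc 2 (by norm_num) a ha b hab
  rw [ncard_filter] at h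
  rw [← h]
  congr 1; ext w
  simp only [Finset.mem_filter, Finset.mem_univ, true_and,
    ← SimpleGraph.dist_eq_one_iff_adj]
  constructor <;> (rintro ⟨h1, h2⟩; exact ⟨h2, h1⟩)

lemma commY' {a b : V} (ha : a ∈ Γ.Y') (hab : Γ.G.dist a b = 2) :
    (Finset.univ.filter (fun w => Γ.G.Adj a w ∧ Γ.G.Adj b w)).card = Γ.c' 2 := by
  have h := Γ.hc' 2 (by norm_num) a ha b hab
  rw [ncard_filter] at h
  rw [← h]
  congr 1; ext w
  simp only [Finset.mem_filter, Finset.mem_univ, true_and,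
    ← SimpleGraph.dist_eq_one_iff_adj]
  constructor <;> (rintro ⟨h1, h2⟩; exact ⟨h2, h1⟩)

lemma degY' {a : V} (ha : a ∈ Γ.Y') :
    (Finset.univ.filter (fun w => Γ.G.Adj a w)).card = Γ.b' 0 := by
  have h := Γ.hb' 0 a ha a SimpleGraph.dist_self
  rw [ncard_filter] at h
  rw [← h]
  congr 1; ext w
  simp only [Finset.mem_filter, Finset.mem_univ, true_and,
    ← SimpleGraph.dist_eq_one_iff_adj]
  constructor
  · exact fun h1 => ⟨h1, h1⟩
  · exact fun h1 => h1.1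

lemma ccount {i : ℕ} (hi : 1 ≤ i) {x z : V} (hx : x ∈ Γ.Y) (hxz : Γ.G.dist x z = i) :
    (Finset.univ.filter (fun w => Γ.G.Adj z w ∧ Γ.G.dist x w = i - 1)).card = Γ.c i := by
  have h := Γ.hc i hi x hx z hxz
  rw [ncard_filter] at h
  rw [← h]
  congr 1
  ext w
  simp [Finset.mem_filter]

lemma bcount {i : ℕ} {x z : V} (hx : x ∈ Γ.Y) (hxz : Γ.G.dist x z = i) :
    (Finset.univ.filter (fun w => Γ.G.Adj z w ∧ Γ.G.dist x w = i + 1)).card = Γ.b i := by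
  have h := Γ.hb i x hx z hxz
  rw [ncard_filter] at h
  rw [← h]
  congr 1
  ext w
  simp [Finset.mem_filter]

lemma gcount (γ : ℕ → ℕ) (hhom : Γ.TwoYHom γ) (hD : 3 ≤ Γ.D) {x y z : V}
    (hx : x ∈ Γ.Y) (hxy : Γ.G.dist x y = 2) (hxz : Γ.G.dist x z = 2)
    (hyz : Γ.G.dist y z = 2) :
    (Finset.univ.filter (fun w => Γ.G.Adj x w ∧ Γ.G.Adj y w ∧ Γ.G.Adj z w)).card = γ 2 := by
  have h := hhom 2 (by norm_num) (by omega) x hx y hxy z hxz hyz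
  rw [ncard_filter] at h
  rw [← h]
  congr 1; ext w
  simp only [Finset.mem_filter, Finset.mem_univ, true_and,
    ← SimpleGraph.dist_eq_one_iff_adj]
  constructor
  · rintro ⟨h1, h2, h3⟩; exact ⟨h3, h1, h2⟩
  · rintro ⟨h1, h2, h3⟩; exact ⟨h2, h3, h1⟩

end DBRG
namespace DBRG
variable (Γ : DBRG V)

lemma id1 (γ : ℕ → ℕ) (hhom : Γ.TwoYHom γ) (hD : 3 ≤ Γ.D) {x z y : V}
    (hx : x ∈ Γ.Y) (hxz : Γ.G.dist x z = 3) (hzy : Γ.G.Adj z y)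
    (hxy : Γ.G.dist x y = 2) :
    Γ.c 2 * (Γ.c' 2 - 1) = (Γ.c 3 - 1) * γ 2 := by
  set A : Finset V := Finset.univ.filter (fun w => Γ.G.Adj x w ∧ Γ.G.Adj y w) with hAdef
  have hAcard : A.card = Γ.c 2 := Γ.commY hx hxy
  set R : V → V → Prop := fun w y' => Γ.G.Adj z y' ∧ Γ.G.Adj w y' ∧ y' ≠ y with hRdef
  clear_value R
  have key := double_count A R
  -- left side
  have hL : ∀ w ∈ A, (Finset.univ.filter (R w)).card = Γ.c' 2 - 1 := by
    intro w hw
    rw [hAdef, Finset.mem_filter] at hw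
    obtain ⟨-, hxw, hyw⟩ := hw
    have hwY' : w ∈ Γ.Y' := Γ.adj_side hxw hx
    have hwz : Γ.G.dist w z = 2 := by
      have t1 : Γ.G.dist x z ≤ Γ.G.dist x w + Γ.G.dist w z := Γ.conn.dist_triangle
      have t2 : Γ.G.dist w z ≤ Γ.G.dist w y + Γ.G.dist y z := Γ.conn.dist_triangle
      have e1 : Γ.G.dist x w ≤ 1 := Γ.adj_dist_le hxw
      have e2 : Γ.G.dist w y ≤ 1 := Γ.adj_dist_le hyw.symm
      have e3 : Γ.G.dist y z ≤ 1 := Γ.adj_dist_le hzy.symm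
      omega
    have hT := Γ.commY' hwY' hwz
    have hfe : Finset.univ.filter (R w)
        = (Finset.univ.filter (fun y' => Γ.G.Adj w y' ∧ Γ.G.Adj z y')).erase y := by
      ext y'
      simp only [hRdef, Finset.mem_filter, Finset.mem_erase, Finset.mem_univ, true_and]
      tauto
    rw [hfe, Finset.card_erase_of_mem (by
      simp only [Finset.mem_filter, Finset.mem_univ, true_and]
      exact ⟨hyw.symm, hzy⟩), hT]
  have hLsum : ∑ w ∈ A, (Finset.univ.filter (R w)).card = Γ.c 2 * (Γ.c' 2 - 1) := by
    rw [Finset.sum_congr rfl hL, Finset.sum_const, smul_eq_mul, hAcard]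
  -- right side
  have hyY : y ∈ Γ.Y := (Γ.side_of_dist hx 2 y hxy).1 (by norm_num)
  have hR : ∀ y' : V, (A.filter (fun w => R w y')).card
      = if Γ.G.Adj z y' ∧ Γ.G.dist x y' = 2 ∧ y' ≠ y then γ 2 else 0 := by
    intro y'
    by_cases hcond : Γ.G.Adj z y' ∧ Γ.G.dist x y' = 2 ∧ y' ≠ y
    · rw [if_pos hcond]
      obtain ⟨hzy', hxy', hy'y⟩ := hcond
      have hnadj : ¬ Γ.G.Adj y y' := fun h => Γ.tri_free hzy h hzy'
      have hyy' : Γ.G.dist y y' = 2 := Γ.dist_eq_two (Ne.symm hy'y) hnadj hzy.symm hzy'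
      have hcnt := Γ.gcount γ hhom hD hx hxy hxy' hyy'
      rw [← hcnt]
      congr 1
      ext w
      simp only [hAdef, hRdef, Finset.mem_filter, Finset.mem_univ, true_and]
      constructor
      · rintro ⟨⟨hxw, hyw⟩, -, hwy', -⟩
        exact ⟨hxw, hyw, hwy'.symm⟩
      · rintro ⟨hxw, hyw, hy'w⟩
        exact ⟨⟨hxw, hyw⟩, hzy', hy'w.symm, hy'y⟩
    · rw [if_neg hcond]
      rw [Finset.card_eq_zero, Finset.filter_eq_empty_iff]
      intro w hw
      rw [hAdef, Finset.mem_filter] at hw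
      obtain ⟨-, hxw, hyw⟩ := hw
      simp only [hRdef]
      rintro ⟨hzy', hwy', hy'y⟩
      apply hcond
      refine ⟨hzy', ?_, hy'y⟩
      have t1 : Γ.G.dist x y' ≤ Γ.G.dist x w + Γ.G.dist w y' := Γ.conn.dist_triangle
      have t2 : Γ.G.dist x z ≤ Γ.G.dist x y' + Γ.G.dist y' z := Γ.conn.dist_triangle
      have e1 : Γ.G.dist x w ≤ 1 := Γ.adj_dist_le hxw
      have e2 : Γ.G.dist w y' ≤ 1 := Γ.adj_dist_le hwy'
      have e3 : Γ.G.dist y' z ≤ 1 := Γ.adj_dist_le hzy'.symm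
      omega
  have hN : (Finset.univ.filter
      (fun y' => Γ.G.Adj z y' ∧ Γ.G.dist x y' = 2 ∧ y' ≠ y)).card = Γ.c 3 - 1 := by
    have hc3 : (Finset.univ.filter
        (fun y' => Γ.G.Adj z y' ∧ Γ.G.dist x y' = 2)).card = Γ.c 3 := by
      have := Γ.ccount (i := 3) (by norm_num) hx hxz
      rw [← this]
    have hfe : Finset.univ.filter (fun y' => Γ.G.Adj z y' ∧ Γ.G.dist x y' = 2 ∧ y' ≠ y)
        = (Finset.univ.filter (fun y' => Γ.G.Adj z y' ∧ Γ.G.dist x y' = 2)).erase y := by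
      ext y'
      simp only [Finset.mem_filter, Finset.mem_erase, Finset.mem_univ, true_and]
      tauto
    rw [hfe, Finset.card_erase_of_mem (by
      simp only [Finset.mem_filter, Finset.mem_univ, true_and]
      exact ⟨hzy, hxy⟩), hc3]
  have hRsum : ∑ y' ∈ (Finset.univ : Finset V), (A.filter (fun w => R w y')).card
      = (Γ.c 3 - 1) * γ 2 := by
    rw [Finset.sum_congr rfl (fun y' _ => hR y'), ← Finset.sum_filter,
      Finset.sum_const, smul_eq_mul, hN]
  exact hLsum.symm.trans (key.trans hRsum)

lemma id2 (γ : ℕ → ℕ) (hhom : Γ.TwoYHom γ) (hD : 3 ≤ Γ.D) {x y w₀ : V}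
    (hx : x ∈ Γ.Y) (hxy : Γ.G.dist x y = 2) (hw1 : Γ.G.Adj x w₀)
    (hw2 : Γ.G.Adj w₀ y) :
    (Γ.b' 0 - 2) * (γ 2 - 1) = (Γ.c 2 - 1) * (Γ.c' 2 - 2) := by
  have hw₀Y' : w₀ ∈ Γ.Y' := Γ.adj_side hw1 hx
  have hxney : x ≠ y := fun h => by
    rw [h, SimpleGraph.dist_self] at hxy; exact absurd hxy (by norm_num)
  set Z : Finset V :=
    Finset.univ.filter (fun z1 => Γ.G.Adj w₀ z1 ∧ z1 ≠ x ∧ z1 ≠ y) with hZdef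
  have hZcard : Z.card = Γ.b' 0 - 2 := by
    have hdeg := Γ.degY' hw₀Y'
    have hfe : Z = ((Finset.univ.filter (fun w => Γ.G.Adj w₀ w)).erase x).erase y := by
      ext z1
      simp only [hZdef, Finset.mem_filter, Finset.mem_erase, Finset.mem_univ, true_and]
      tauto
    rw [hfe, Finset.card_erase_of_mem (by
        simp only [Finset.mem_erase, Finset.mem_filter, Finset.mem_univ, true_and]
        exact ⟨Ne.symm hxney, hw2⟩),
      Finset.card_erase_of_mem (by
        simp only [Finset.mem_filter, Finset.mem_univ, true_and]
        exact hw1.symm), hdeg]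
    omega
  set R : V → V → Prop :=
    fun z1 w => Γ.G.Adj x w ∧ Γ.G.Adj y w ∧ Γ.G.Adj z1 w ∧ w ≠ w₀ with hRdef
  clear_value R
  have key := double_count Z R
  -- left
  have hL : ∀ z1 ∈ Z, (Finset.univ.filter (R z1)).card = γ 2 - 1 := by
    intro z1 hz1
    rw [hZdef, Finset.mem_filter] at hz1
    obtain ⟨-, hadj, hz1x, hz1y⟩ := hz1
    have hxz1 : Γ.G.dist x z1 = 2 :=
      Γ.dist_eq_two (Ne.symm hz1x) (fun h => Γ.tri_free hw1 hadj h) hw1 hadj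
    have hyz1 : Γ.G.dist y z1 = 2 :=
      Γ.dist_eq_two (Ne.symm hz1y) (fun h => Γ.tri_free hw2.symm hadj h) hw2.symm hadj
    have hS := Γ.gcount γ hhom hD hx hxy hxz1 hyz1
    have hfe : Finset.univ.filter (R z1)
        = (Finset.univ.filter
            (fun w => Γ.G.Adj x w ∧ Γ.G.Adj y w ∧ Γ.G.Adj z1 w)).erase w₀ := by
      ext w
      simp only [hRdef, Finset.mem_filter, Finset.mem_erase, Finset.mem_univ, true_and]
      tauto
    rw [hfe, Finset.card_erase_of_mem (by
      simp only [Finset.mem_filter, Finset.mem_univ, true_and]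
      exact ⟨hw1, hw2.symm, hadj.symm⟩), hS]
  have hLsum : ∑ z1 ∈ Z, (Finset.univ.filter (R z1)).card
      = (Γ.b' 0 - 2) * (γ 2 - 1) := by
    rw [Finset.sum_congr rfl hL, Finset.sum_const, smul_eq_mul, hZcard]
  -- right
  have hR : ∀ w : V, (Z.filter (fun z1 => R z1 w)).card
      = if Γ.G.Adj x w ∧ Γ.G.Adj y w ∧ w ≠ w₀ then Γ.c' 2 - 2 else 0 := by
    intro w
    by_cases hcond : Γ.G.Adj x w ∧ Γ.G.Adj y w ∧ w ≠ w₀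
    · rw [if_pos hcond]
      obtain ⟨hxw, hyw, hwne⟩ := hcond
      have hwY' : w ∈ Γ.Y' := Γ.adj_side hxw hx
      have hww₀ : Γ.G.dist w w₀ = 2 :=
        Γ.dist_eq_two hwne (fun h => Γ.tri_free hxw.symm hw1 h) hxw.symm hw1
      have hT := Γ.commY' hwY' hww₀
      have hfe : Z.filter (fun z1 => R z1 w)
          = ((Finset.univ.filter
              (fun z1 => Γ.G.Adj w z1 ∧ Γ.G.Adj w₀ z1)).erase x).erase y := by
        ext z1
        simp only [hZdef, hRdef, Finset.mem_filter, Finset.mem_erase, Finset.mem_univ,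
          true_and]
        constructor
        · rintro ⟨⟨hadj, hz1x, hz1y⟩, -, -, hz1w, -⟩
          exact ⟨hz1y, hz1x, hz1w.symm, hadj⟩
        · rintro ⟨hz1y, hz1x, hwz1, hadj⟩
          exact ⟨⟨hadj, hz1x, hz1y⟩, hxw, hyw, hwz1.symm, hwne⟩
      rw [hfe, Finset.card_erase_of_mem (by
          simp only [Finset.mem_erase, Finset.mem_filter, Finset.mem_univ, true_and]
          exact ⟨Ne.symm hxney, hyw.symm, hw2⟩),
        Finset.card_erase_of_mem (by
          simp only [Finset.mem_filter, Finset.mem_univ, true_and]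
          exact ⟨hxw.symm, hw1.symm⟩), hT]
      omega
    · rw [if_neg hcond]
      rw [Finset.card_eq_zero, Finset.filter_eq_empty_iff]
      intro z1 _
      simp only [hRdef]
      rintro ⟨haxw, hayw, -, hne⟩
      exact hcond ⟨haxw, hayw, hne⟩
  have hA : (Finset.univ.filter
      (fun w => Γ.G.Adj x w ∧ Γ.G.Adj y w ∧ w ≠ w₀)).card = Γ.c 2 - 1 := by
    have hc2 := Γ.commY hx hxy
    have hfe : Finset.univ.filter (fun w => Γ.G.Adj x w ∧ Γ.G.Adj y w ∧ w ≠ w₀)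
        = (Finset.univ.filter (fun w => Γ.G.Adj x w ∧ Γ.G.Adj y w)).erase w₀ := by
      ext w
      simp only [Finset.mem_filter, Finset.mem_erase, Finset.mem_univ, true_and]
      tauto
    rw [hfe, Finset.card_erase_of_mem (by
      simp only [Finset.mem_filter, Finset.mem_univ, true_and]
      exact ⟨hw1, hw2.symm⟩), hc2]
  have hRsum : ∑ w ∈ (Finset.univ : Finset V), (Z.filter (fun z1 => R z1 w)).card
      = (Γ.c 2 - 1) * (Γ.c' 2 - 2) := by
    rw [Finset.sum_congr rfl (fun w _ => hR w), ← Finset.sum_filter,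
      Finset.sum_const, smul_eq_mul, hA]
  exact hLsum.symm.trans (key.trans hRsum)

end DBRG
set_option maxHeartbeats 1000000 in
theorem stmt_14 {V : Type} [Fintype V] (Γ : DBRG V) (hD : 3 ≤ Γ.D)
    (γ : ℕ → ℕ) (hhom : Γ.TwoYHom γ) (hc2' : 3 ≤ Γ.c' 2) :
    Γ.D ≤ 5 := by
  by_contra hD5
  push_neg at hD5
  have hD6 : 6 ≤ Γ.D := hD5
  obtain ⟨x, hx⟩ := Γ.Yne
  obtain ⟨⟨t, ht⟩, -⟩ := Γ.eccY x hx
  -- points on a geodesic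
  obtain ⟨y6, hy6, hy6t⟩ := Γ.exists_mid (u := x) (v := t) (k := 6) (by omega)
  obtain ⟨z3, hz3, hz3y6⟩ := Γ.exists_mid (u := x) (v := y6) (k := 3) (by omega)
  rw [hy6] at hz3y6
  norm_num at hz3y6
  obtain ⟨y, hxy, hyz3⟩ := Γ.exists_mid (u := x) (v := z3) (k := 2) (by omega)
  rw [hz3] at hyz3
  norm_num at hyz3
  obtain ⟨w₀, hxw₀, hw₀y⟩ := Γ.exists_mid (u := x) (v := y) (k := 1) (by omega)
  rw [hxy] at hw₀y
  norm_num at hw₀y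
  have hyz3adj : Γ.G.Adj y z3 := hyz3
  have hxw₀adj : Γ.G.Adj x w₀ := SimpleGraph.dist_eq_one_iff_adj.mp hxw₀
  have hw₀yadj : Γ.G.Adj w₀ y := hw₀y
  -- memberships
  have hz3Y' : z3 ∈ Γ.Y' := (Γ.side_of_dist hx 3 z3 hz3).2 (by decide)
  have hy6Y : y6 ∈ Γ.Y := (Γ.side_of_dist hx 6 y6 hy6).1 (by decide)
  have hyY : y ∈ Γ.Y := (Γ.side_of_dist hx 2 y hxy).1 (by decide)
  have hw₀Y' : w₀ ∈ Γ.Y' := Γ.adj_side hxw₀adj hx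
  -- dist w₀ z3 = 2
  have hw₀z3 : Γ.G.dist w₀ z3 = 2 := by
    refine Γ.dist_eq_two ?_ (Γ.no_adj_Y' hw₀Y' hz3Y') hw₀yadj hyz3adj
    intro h
    rw [h] at hxw₀
    omega
  -- k' ≥ 3
  have hcomm := Γ.commY' hw₀Y' hw₀z3
  have hdegw₀ := Γ.degY' hw₀Y'
  have hk3 : 3 ≤ Γ.b' 0 := by
    have hsub : (Finset.univ.filter (fun w => Γ.G.Adj w₀ w ∧ Γ.G.Adj z3 w))
        ⊆ (Finset.univ.filter (fun w => Γ.G.Adj w₀ w)) := by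
      intro w hw
      simp only [Finset.mem_filter, Finset.mem_univ, true_and] at *
      exact hw.1
    have := Finset.card_le_card hsub
    omega
  -- c 2 ≥ 2
  have hc22 : 2 ≤ Γ.c 2 := by
    obtain ⟨a, ha, b, hb, hab⟩ := Finset.one_lt_card.mp (by omega :
      1 < (Finset.univ.filter (fun w => Γ.G.Adj w₀ w ∧ Γ.G.Adj z3 w)).card)
    simp only [Finset.mem_filter, Finset.mem_univ, true_and] at ha hb
    have haY : a ∈ Γ.Y := Γ.adj_side' ha.1 hw₀Y'
    have hbY : b ∈ Γ.Y := Γ.adj_side' hb.1 hw₀Y'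
    have hdab : Γ.G.dist a b = 2 :=
      Γ.dist_eq_two hab (Γ.no_adj_Y haY hbY) ha.1.symm hb.1
    have hcab := Γ.commY haY hdab
    have hw₀nez3 : w₀ ≠ z3 := by
      intro h
      rw [h, SimpleGraph.dist_self] at hw₀z3
      omega
    have hsub : ({w₀, z3} : Finset V)
        ⊆ (Finset.univ.filter (fun w => Γ.G.Adj a w ∧ Γ.G.Adj b w)) := by
      intro w hw
      simp only [Finset.mem_insert, Finset.mem_singleton] at hw
      simp only [Finset.mem_filter, Finset.mem_univ, true_and]
      rcases hw with rfl | rfl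
      · exact ⟨ha.1.symm, hb.1.symm⟩
      · exact ⟨ha.2.symm, hb.2.symm⟩
    have := Finset.card_le_card hsub
    rw [Finset.card_pair hw₀nez3] at this
    omega
  -- c 3 ≥ 1
  have hc3cnt := Γ.ccount (i := 3) (by norm_num) hx hz3
  have hc31 : 1 ≤ Γ.c 3 := by
    rw [← hc3cnt]
    refine Finset.card_pos.mpr ⟨y, ?_⟩
    simp only [Finset.mem_filter, Finset.mem_univ, true_and]
    exact ⟨hyz3adj.symm, hxy⟩
  -- γ 2 ≥ 1
  have hg1 : 1 ≤ γ 2 := by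
    have hxney : x ≠ y := by
      intro h
      rw [h, SimpleGraph.dist_self] at hxy
      omega
    have hcard : 1 ≤ ((( Finset.univ.filter (fun w => Γ.G.Adj w₀ w)).erase x).erase y).card := by
      rw [Finset.card_erase_of_mem (by
          simp only [Finset.mem_erase, Finset.mem_filter, Finset.mem_univ, true_and]
          exact ⟨Ne.symm hxney, hw₀yadj⟩),
        Finset.card_erase_of_mem (by
          simp only [Finset.mem_filter, Finset.mem_univ, true_and]
          exact hxw₀adj.symm), hdegw₀]
      omega
    have hne : ((((Finset.univ.filter (fun w => Γ.G.Adj w₀ w)).erase x).erase y)).Nonempty :=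
      Finset.card_pos.mp (by omega)
    obtain ⟨z1, hz1⟩ := hne
    simp only [Finset.mem_erase, Finset.mem_filter, Finset.mem_univ, true_and] at hz1
    obtain ⟨hz1y, hz1x, hadj⟩ := hz1
    have hxz1 : Γ.G.dist x z1 = 2 :=
      Γ.dist_eq_two (Ne.symm hz1x) (fun h => Γ.tri_free hxw₀adj hadj h) hxw₀adj hadj
    have hyz1 : Γ.G.dist y z1 = 2 :=
      Γ.dist_eq_two (Ne.symm hz1y) (fun h => Γ.tri_free hw₀yadj.symm hadj h)
        hw₀yadj.symm hadj
    have hS := Γ.gcount γ hhom hD hx hxy hxz1 hyz1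
    rw [← hS]
    refine Finset.card_pos.mpr ⟨w₀, ?_⟩
    simp only [Finset.mem_filter, Finset.mem_univ, true_and]
    exact ⟨hxw₀adj, hw₀yadj.symm, hadj.symm⟩
  -- c 3 ≤ b 3
  have hb3cnt := Γ.bcount (i := 3) hy6Y (by rw [SimpleGraph.dist_comm]; exact hz3y6)
  have hc3leb3 : Γ.c 3 ≤ Γ.b 3 := by
    rw [← hc3cnt, ← hb3cnt]
    apply Finset.card_le_card
    intro w hw
    simp only [Finset.mem_filter, Finset.mem_univ, true_and] at *
    refine ⟨hw.1, ?_⟩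
    have hw2 : Γ.G.dist x w = 2 := hw.2
    have t1 : Γ.G.dist x y6 ≤ Γ.G.dist x w + Γ.G.dist w y6 := Γ.conn.dist_triangle
    have t2 : Γ.G.dist y6 w ≤ Γ.G.dist y6 z3 + Γ.G.dist z3 w := Γ.conn.dist_triangle
    have e1 : Γ.G.dist z3 w ≤ 1 := Γ.adj_dist_le hw.1
    have e2 : Γ.G.dist w y6 = Γ.G.dist y6 w := SimpleGraph.dist_comm
    have e3 : Γ.G.dist y6 z3 = 3 := by rw [SimpleGraph.dist_comm]; exact hz3y6
    omega
  -- c 3 + b 3 = b' 0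
  have hb3cnt' := Γ.bcount (i := 3) hx hz3
  have hdegz3 := Γ.degY' hz3Y'
  have hsplit : Γ.c 3 + Γ.b 3 = Γ.b' 0 := by
    rw [← hc3cnt, ← hb3cnt', ← hdegz3]
    rw [← Finset.card_union_of_disjoint (by
      rw [Finset.disjoint_left]
      intro w hw1 hw2
      simp only [Finset.mem_filter, Finset.mem_univ, true_and] at hw1 hw2
      have : (3:ℕ) - 1 = 2 := by norm_num
      rw [this] at hw1
      omega)]
    congr 1
    ext w
    simp only [Finset.mem_union, Finset.mem_filter, Finset.mem_univ, true_and]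
    constructor
    · rintro (⟨h1, -⟩ | ⟨h1, -⟩) <;> exact h1
    · intro hadj
      have t1 : Γ.G.dist x z3 ≤ Γ.G.dist x w + Γ.G.dist z3 w := by
        rw [SimpleGraph.dist_comm (u := z3)]
        exact Γ.conn.dist_triangle
      have t2 : Γ.G.dist x w ≤ Γ.G.dist x z3 + Γ.G.dist z3 w := Γ.conn.dist_triangle
      have e1 : Γ.G.dist z3 w ≤ 1 := Γ.adj_dist_le hadj
      have hne3 : Γ.G.dist x w ≠ 3 := by
        intro h3
        have hwY' : w ∈ Γ.Y' := (Γ.side_of_dist hx 3 w h3).2 (by decide)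
        have hwY : w ∈ Γ.Y := Γ.adj_side' hadj hz3Y'
        exact Γ.disj w ⟨hwY, hwY'⟩
      have : Γ.G.dist x w = 2 ∨ Γ.G.dist x w = 4 := by omega
      rcases this with h | h
      · exact Or.inl ⟨hadj, by rw [h]⟩
      · exact Or.inr ⟨hadj, h⟩
  -- the two identities
  have e1 := Γ.id1 γ hhom hD hx hz3 hyz3adj.symm hxy
  have e2 := Γ.id2 γ hhom hD hx hxy hxw₀adj hw₀yadj
  -- g ≥ 2
  set g := γ 2 with hgdef
  set c2 := Γ.c 2 with hc2def
  set c3 := Γ.c 3 with hc3def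
  set cc2 := Γ.c' 2 with hcc2def
  set k' := Γ.b' 0 with hk'def
  clear_value g c2 c3 cc2 k'
  have hg2 : 2 ≤ g := by
    by_contra hg
    have hgeq : g - 1 = 0 := by omega
    rw [hgeq, mul_zero] at e2
    have h1 : 0 < c2 - 1 := by omega
    have h2 : 0 < cc2 - 2 := by omega
    have := Nat.mul_pos h1 h2
    omega
  have h2c3 : 2 * c3 ≤ k' := by omega
  -- final arithmetic
  obtain ⟨A1, hA1⟩ : ∃ a, c3 = a + 1 := ⟨c3 - 1, by omega⟩
  obtain ⟨A3, hA3, hA3'⟩ : ∃ a, cc2 = a + 2 ∧ 1 ≤ a := ⟨cc2 - 2, by omega, by omega⟩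
  obtain ⟨A4, hA4, hA4'⟩ : ∃ a, c2 = a + 1 ∧ 1 ≤ a := ⟨c2 - 1, by omega, by omega⟩
  obtain ⟨A6, hA6, hA6'⟩ : ∃ a, g = a + 1 ∧ 1 ≤ a := ⟨g - 1, by omega, by omega⟩
  obtain ⟨A5, hA5⟩ : ∃ a, k' = a + 2 := ⟨k' - 2, by omega⟩
  subst hA1 hA3 hA4 hA6 hA5
  have f1 : (A3 + 2) - 1 = A3 + 1 := by omega
  have f2 : (A1 + 1) - 1 = A1 := by omega
  have f3 : (A5 + 2) - 2 = A5 := by omega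
  have f4 : (A6 + 1) - 1 = A6 := by omega
  have f5 : (A4 + 1) - 1 = A4 := by omega
  have f6 : (A3 + 2) - 2 = A3 := by omega
  rw [f1, f2] at e1
  rw [f3, f4, f5, f6] at e2
  -- e1 : (A4 + 1) * (A3 + 1) = A1 * (A6 + 1)
  -- e2 : A5 * A6 = A4 * A3
  have k1 : 2 * A1 ≤ A5 := by omega
  have big : 2 * A6 * ((A4 + 1) * (A3 + 1)) ≤ 2 * A6 * (A4 * A3) := by
    calc 2 * A6 * ((A4 + 1) * (A3 + 1)) = 2 * A1 * (A6 * (A6 + 1)) := by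
          rw [e1]; ring
    _ ≤ A5 * (A6 * (A6 + 1)) := mul_le_mul_left k1 _
    _ = (A5 * A6) * (A6 + 1) := by ring
    _ = (A4 * A3) * (A6 + 1) := by rw [e2]
    _ ≤ (A4 * A3) * (2 * A6) := mul_le_mul_right (by omega) _
    _ = 2 * A6 * (A4 * A3) := by ring
  have hlt : A4 * A3 < (A4 + 1) * (A3 + 1) := by
    have exp : (A4 + 1) * (A3 + 1) = A4 * A3 + A4 + A3 + 1 := by ring
    omega
  have hlt2 : 2 * A6 * (A4 * A3) < 2 * A6 * ((A4 + 1) * (A3 + 1)) :=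
    mul_lt_mul_of_pos_left hlt (by omega)
  exact absurd (lt_of_le_of_lt big hlt2) (lt_irrefl _)
end
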